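/- arXiv:1612.02500 — 6 statements merged into one kernel-verified Lean document; each statement's English description precedes it below -/
import Mathlib

section
/- Let E be a nonzero real Banach space and S : E ⇉ E* be a multifunction with nonempty graph that is closed, monotone and quasidense. Then S is maximally monotone. -/
open NormedSpace Filter

/-- A set `A ⊆ X × X*` (the graph of a multifunction `X ⇉ X*`) is monotone:
`⟨p − q, p* − q*⟩ ≥ 0` for all `(p,p*), (q,q*)` in `A`. -/
def IsMonotoneGraph {X : Type*} [NormedAddCommGroup X] [NormedSpace ℝ X]
    (A : Set (X × StrongDual ℝ X)) : Prop :=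
  ∀ p ∈ A, ∀ q ∈ A, 0 ≤ (p.2 - q.2) (p.1 - q.1)

/-- `A` is maximally monotone: monotone and not properly contained in a monotone graph. -/
def IsMaxMonotoneGraph {X : Type*} [NormedAddCommGroup X] [NormedSpace ℝ X]
    (A : Set (X × StrongDual ℝ X)) : Prop :=
  IsMonotoneGraph A ∧ ∀ B : Set (X × StrongDual ℝ X), IsMonotoneGraph B → A ⊆ B → B = A

/-- `A` is quasidense: for every `(x,x*)`,
`inf_{(s,s*)∈A} [½‖s−x‖² + ½‖s*−x*‖² + ⟨s−x,s*−x*⟩] ≤ 0`. -/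
def IsQuasidense {X : Type*} [NormedAddCommGroup X] [NormedSpace ℝ X]
    (A : Set (X × StrongDual ℝ X)) : Prop :=
  ∀ (x : X) (x' : StrongDual ℝ X) (ε : ℝ), 0 < ε → ∃ p ∈ A,
    2⁻¹ * ‖p.1 - x‖ ^ 2 + 2⁻¹ * ‖p.2 - x'‖ ^ 2 + (p.2 - x') (p.1 - x) < ε

/-- The Fitzpatrick function of the graph `A`:
`φ_A(x,x*) = sup_{(s,s*)∈A} [⟨s,x*⟩ + ⟨x,s*⟩ − ⟨s,s*⟩]`, valued in `(−∞,∞]` (here `EReal`). -/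
noncomputable def fitzFn {X : Type*} [NormedAddCommGroup X] [NormedSpace ℝ X]
    (A : Set (X × StrongDual ℝ X)) (p : X × StrongDual ℝ X) : EReal :=
  ⨆ q : A, ((p.2 q.1.1 + q.1.2 p.1 - q.1.2 q.1.1 : ℝ) : EReal)

/-- Fenchel conjugate of a function on `X × X*`, as a function on `X* × X**`, with respect
to the pairing `⟨(x,x*),(y*,y**)⟩ = ⟨x,y*⟩ + ⟨x*,y**⟩`. -/
noncomputable def pairConj {X : Type*} [NormedAddCommGroup X] [NormedSpace ℝ X]
    (f : X × StrongDual ℝ X → EReal) (q : StrongDual ℝ X × StrongDual ℝ (StrongDual ℝ X)) : EReal :=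
  ⨆ p : X × StrongDual ℝ X, (((q.1 p.1 + q.2 p.2 : ℝ) : EReal) - f p)

/-- Graph of the Fitzpatrick extension `S^𝔽 : X* ⇉ X**` of a multifunction with graph `A`:
`(y*,y**) ∈ G(S^𝔽)` iff `φ_A*(y*,y**) = ⟨y*,y**⟩`. -/
noncomputable def fitzExtGraph {X : Type*} [NormedAddCommGroup X] [NormedSpace ℝ X]
    (A : Set (X × StrongDual ℝ X)) : Set (StrongDual ℝ X × StrongDual ℝ (StrongDual ℝ X)) :=
  {q | pairConj (fitzFn A) q = ((q.2 q.1 : ℝ) : EReal)}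

/-- Fenchel conjugate of `f : X → (−∞,∞]`: `f*(x*) = sup_x [⟨x,x*⟩ − f(x)]`. -/
noncomputable def fnConj {X : Type*} [NormedAddCommGroup X] [NormedSpace ℝ X]
    (f : X → EReal) (x' : StrongDual ℝ X) : EReal :=
  ⨆ x : X, (((x' x : ℝ) : EReal) - f x)

/-- Graph of the subdifferential of `f`: `x* ∈ ∂f(x)` iff `f(x) + f*(x*) = ⟨x,x*⟩`. -/
noncomputable def subdiffGraph {X : Type*} [NormedAddCommGroup X] [NormedSpace ℝ X]
    (f : X → EReal) : Set (X × StrongDual ℝ X) :=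
  {p | f p.1 + fnConj f p.2 = ((p.2 p.1 : ℝ) : EReal)}

/-- Convexity for `(−∞,∞]`-valued functions. -/
def ERealConvexOn {X : Type*} [AddCommGroup X] [Module ℝ X] (f : X → EReal) : Prop :=
  ∀ x y : X, ∀ a b : ℝ, 0 ≤ a → 0 ≤ b → a + b = 1 →
    f (a • x + b • y) ≤ (a : EReal) * f x + (b : EReal) * f y

/-- `f` is proper: never `−∞` and somewhere finite. -/
def ERealProper {X : Type*} (f : X → EReal) : Prop :=
  (∀ x, f x ≠ ⊥) ∧ (∃ x, f x ≠ ⊤)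

/-- Domain of a multifunction given by its graph. -/
def graphDomain {X Y : Type*} (A : Set (X × Y)) : Set X := {x | ∃ y, (x, y) ∈ A}

/-- Range of a multifunction given by its graph. -/
def graphRange {X Y : Type*} (A : Set (X × Y)) : Set Y := {y | ∃ x, (x, y) ∈ A}

/-- Graph of the sum of two multifunctions: `(S+T)(x) = S(x) + T(x)`. -/
def sumGraph {X Y : Type*} [Add Y] (A B : Set (X × Y)) : Set (X × Y) :=
  {p | ∃ u v, (p.1, u) ∈ A ∧ (p.1, v) ∈ B ∧ p.2 = u + v}

/-- Every closed, monotone, quasidense multifunction from a nonzero real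
Banach space into its dual is maximally monotone. -/
theorem quasidense_isMaxMonotone
    {E : Type*} [NormedAddCommGroup E] [NormedSpace ℝ E] [CompleteSpace E] [Nontrivial E]
    (A : Set (E × StrongDual ℝ E)) (hne : A.Nonempty)
    (hcl : IsClosed A) (hmono : IsMonotoneGraph A) (hqd : IsQuasidense A) :
    IsMaxMonotoneGraph A := by
  refine ⟨hmono, fun B hB hAB => Set.Subset.antisymm ?_ hAB⟩
  rintro ⟨x, x'⟩ hz
  have hseq : ∀ n : ℕ, ∃ p ∈ A,
      2⁻¹ * ‖p.1 - x‖ ^ 2 + 2⁻¹ * ‖p.2 - x'‖ ^ 2 + (p.2 - x') (p.1 - x) < 1 / (n + 1) := by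
    intro n; exact hqd x x' _ (by positivity)
  choose p hpA hp using hseq
  have key : ∀ n : ℕ, ‖(p n).1 - x‖ ^ 2 + ‖(p n).2 - x'‖ ^ 2 ≤ 2 / (n + 1) := by
    intro n
    have hm : 0 ≤ ((p n).2 - x') ((p n).1 - x) := by
      have := hB (p n) (hAB (hpA n)) (x, x') hz
      simpa using this
    have h := hp n
    have : (2 : ℝ) / (n + 1) = 2 * (1 / (n + 1)) := by ring
    nlinarith [h, hm]
  have hlim : Tendsto (fun n : ℕ => (2 : ℝ) / (n + 1)) atTop (nhds 0) := by
    have := tendsto_one_div_add_atTop_nhds_zero_nat.const_mul (2 : ℝ)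
    simpa [mul_one_div, div_eq_mul_inv] using this
  have hsq1 : Tendsto (fun n : ℕ => ‖(p n).1 - x‖ ^ 2) atTop (nhds 0) := by
    refine squeeze_zero (fun n => by positivity) (fun n => ?_) hlim
    have := key n; nlinarith [sq_nonneg ‖(p n).2 - x'‖]
  have hsq2 : Tendsto (fun n : ℕ => ‖(p n).2 - x'‖ ^ 2) atTop (nhds 0) := by
    refine squeeze_zero (fun n => by positivity) (fun n => ?_) hlim
    have := key n; nlinarith [sq_nonneg ‖(p n).1 - x‖]
  have hn1 : Tendsto (fun n : ℕ => ‖(p n).1 - x‖) atTop (nhds 0) := by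
    have := (Real.continuous_sqrt.tendsto 0).comp hsq1
    simpa [Function.comp_def, Real.sqrt_sq (norm_nonneg _), Real.sqrt_eq_zero'] using this
  have hn2 : Tendsto (fun n : ℕ => ‖(p n).2 - x'‖) atTop (nhds 0) := by
    have := (Real.continuous_sqrt.tendsto 0).comp hsq2
    simpa [Function.comp_def, Real.sqrt_sq (norm_nonneg _), Real.sqrt_eq_zero'] using this
  have ht1 : Tendsto (fun n => (p n).1) atTop (nhds x) :=
    tendsto_iff_norm_sub_tendsto_zero.2 hn1
  have ht2 : Tendsto (fun n => (p n).2) atTop (nhds x') :=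
    tendsto_iff_norm_sub_tendsto_zero.2 hn2
  have ht : Tendsto p atTop (nhds (x, x')) := by
    rw [Prod.tendsto_iff]; exact ⟨ht1, ht2⟩
  exact hcl.mem_of_tendsto ht (Filter.Eventually.of_forall hpA)
end

section
/- Let E be a nonzero real Banach space and S : E ⇉ E* be closed, monotone and quasidense. Then for all (x,x*) ∈ E × E*, φ_S(x,x*) ≥ ⟨x,x*⟩, and {(x,x*) ∈ E × E* : φ_S(x,x*) = ⟨x,x*⟩} = G(S). -/
open NormedSpace Filter

/-- For a closed, monotone, quasidense `S`, the Fitzpatrick function satisfies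
`φ_S ≥ ⟨·,·⟩` everywhere, with equality exactly on `G(S)`. -/
theorem fitzFn_ge_pairing_and_eq_iff_mem
    {E : Type*} [NormedAddCommGroup E] [NormedSpace ℝ E] [CompleteSpace E] [Nontrivial E]
    (A : Set (E × StrongDual ℝ E)) (hne : A.Nonempty)
    (hcl : IsClosed A) (hmono : IsMonotoneGraph A) (hqd : IsQuasidense A) :
    (∀ p : E × StrongDual ℝ E, ((p.2 p.1 : ℝ) : EReal) ≤ fitzFn A p) ∧
      {p : E × StrongDual ℝ E | fitzFn A p = ((p.2 p.1 : ℝ) : EReal)} = A := by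
  have hval : ∀ (p : E × StrongDual ℝ E) (q : E × StrongDual ℝ E),
      p.2 q.1 + q.2 p.1 - q.2 q.1 = p.2 p.1 - (q.2 - p.2) (q.1 - p.1) := by
    intro p q
    simp only [ContinuousLinearMap.sub_apply, map_sub]
    ring
  have hle_sup : ∀ (p : E × StrongDual ℝ E) (q : E × StrongDual ℝ E), q ∈ A →
      ((p.2 q.1 + q.2 p.1 - q.2 q.1 : ℝ) : EReal) ≤ fitzFn A p := by
    intro p q hq
    exact le_iSup (fun r : A => ((p.2 r.1.1 + r.1.2 p.1 - r.1.2 r.1.1 : ℝ) : EReal)) ⟨q, hq⟩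
  have hge : ∀ p : E × StrongDual ℝ E, ((p.2 p.1 : ℝ) : EReal) ≤ fitzFn A p := by
    intro p
    apply le_of_forall_lt
    intro c hc
    induction c using EReal.rec with
    | bot =>
        obtain ⟨q, hq⟩ := hne
        exact lt_of_lt_of_le (EReal.bot_lt_coe _) (hle_sup p q hq)
    | coe r =>
        have hr : r < p.2 p.1 := by exact_mod_cast hc
        obtain ⟨q, hqA, hqlt⟩ := hqd p.1 p.2 (p.2 p.1 - r) (by linarith)
        have h1 : 0 ≤ 2⁻¹ * ‖q.1 - p.1‖ ^ 2 + 2⁻¹ * ‖q.2 - p.2‖ ^ 2 := by positivity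
        have h2 : r < p.2 q.1 + q.2 p.1 - q.2 q.1 := by rw [hval]; linarith
        exact lt_of_lt_of_le (EReal.coe_lt_coe_iff.mpr h2) (hle_sup p q hqA)
    | top => exact absurd hc (not_top_lt)
  refine ⟨hge, ?_⟩
  ext p
  simp only [Set.mem_setOf_eq]
  constructor
  · intro hp
    have hmon : ∀ q ∈ A, 0 ≤ (q.2 - p.2) (q.1 - p.1) := by
      intro q hq
      have hle : ((p.2 q.1 + q.2 p.1 - q.2 q.1 : ℝ) : EReal) ≤ ((p.2 p.1 : ℝ) : EReal) := by
        rw [← hp]; exact hle_sup p q hq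
      have h := EReal.coe_le_coe_iff.mp hle
      rw [hval] at h; linarith
    have hcls : p ∈ closure A := by
      rw [Metric.mem_closure_iff]
      intro ε hε
      obtain ⟨q, hqA, hqlt⟩ := hqd p.1 p.2 (ε ^ 2 / 2) (by positivity)
      have h0 := hmon q hqA
      have h1 : ‖q.1 - p.1‖ ^ 2 < ε ^ 2 := by nlinarith [sq_nonneg ‖q.2 - p.2‖]
      have h2 : ‖q.2 - p.2‖ ^ 2 < ε ^ 2 := by nlinarith [sq_nonneg ‖q.1 - p.1‖]
      refine ⟨q, hqA, ?_⟩
      rw [Prod.dist_eq]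
      have e1 : dist p.1 q.1 < ε := by
        rw [dist_eq_norm, norm_sub_rev]
        nlinarith [norm_nonneg (q.1 - p.1)]
      have e2 : dist p.2 q.2 < ε := by
        rw [dist_eq_norm, norm_sub_rev]
        nlinarith [norm_nonneg (q.2 - p.2)]
      exact max_lt e1 e2
    rwa [hcl.closure_eq] at hcls
  · intro hp
    refine le_antisymm ?_ (hge p)
    refine iSup_le fun q => ?_
    have h0 := hmono q.1 q.2 p hp
    have h1 : p.2 q.1.1 + q.1.2 p.1 - q.1.2 q.1.1 ≤ p.2 p.1 := by
      rw [hval]; linarith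
    exact EReal.coe_le_coe_iff.mpr h1
end

section
/- Let E be a nonzero real Banach space, g : E → (−∞,∞] be proper, convex and lower semicontinuous, and ε > 0. Then there exists (s,s*) ∈ G(∂g) such that ½‖s‖² + ⟨s,s*⟩ + ½‖s*‖² < ε. -/
open NormedSpace Filter

section AuxProof
set_option linter.unusedSectionVars false
variable {E : Type*} [NormedAddCommGroup E] [NormedSpace ℝ E]

lemma sq_convex_aux {a b p q n : ℝ} (ha : 0 ≤ a) (hb : 0 ≤ b) (hab : a + b = 1)
    (hp : 0 ≤ p) (hq : 0 ≤ q) (hn : 0 ≤ n) (h : n ≤ a * p + b * q) :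
    2⁻¹ * n ^ 2 ≤ a * (2⁻¹ * p ^ 2) + b * (2⁻¹ * q ^ 2) := by
  have h1 : n ^ 2 ≤ (a * p + b * q) ^ 2 := by nlinarith
  have h2 : (a * p + b * q) ^ 2 ≤ a * p ^ 2 + b * q ^ 2 := by
    nlinarith [mul_nonneg ha hb, sq_nonneg (p - q)]
  linarith


lemma lsc_add_cont {g : E → EReal} (hbot : ∀ x, g x ≠ ⊥) (hlsc : LowerSemicontinuous g)
    {φ : E → ℝ} (hφ : Continuous φ) :
    LowerSemicontinuous fun x => g x + ((φ x : ℝ) : EReal) := by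
  intro x y hy
  induction y with
  | bot =>
    filter_upwards with z
    simp only [bot_lt_iff_ne_bot, ne_eq, EReal.add_eq_bot_iff]
    push_neg
    exact ⟨hbot z, EReal.coe_ne_bot _⟩
  | coe yr =>
    simp only at hy
    have hab : ∃ a b : ℝ, yr < a + b ∧ ((a : ℝ) : EReal) < g x ∧ b < φ x := by
      rcases eq_or_ne (g x) ⊤ with hx | hx
      · exact ⟨yr - φ x + 1, φ x - 2⁻¹, by ring_nf; linarith, hx ▸ EReal.coe_lt_top _,
          by linarith⟩
      · have hxb := hbot x
        have hgx : g x = (((g x).toReal : ℝ) : EReal) := (EReal.coe_toReal hx hxb).symm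
        set gr := (g x).toReal with hgr
        have hyr : yr < gr + φ x := by
          rw [hgx] at hy
          exact_mod_cast hy
        refine ⟨gr - (gr + φ x - yr)/3, φ x - (gr + φ x - yr)/3, by linarith, ?_, by linarith⟩
        rw [hgx]
        exact_mod_cast (by linarith : gr - (gr + φ x - yr)/3 < gr)
    obtain ⟨a, b, h1, h2, h3⟩ := hab
    have e1 := hlsc x _ h2
    have e2 : ∀ᶠ z in nhds x, b < φ z := (hφ.continuousAt (x := x)).eventually (eventually_gt_nhds h3)
    filter_upwards [e1, e2] with z hz1 hz2
    calc ((yr : ℝ) : EReal) < ((a + b : ℝ) : EReal) := by exact_mod_cast h1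
      _ = ((a : ℝ) : EReal) + ((b : ℝ) : EReal) := EReal.coe_add a b
      _ ≤ g z + ((φ z : ℝ) : EReal) := add_le_add hz1.le (by exact_mod_cast hz2.le)
  | top => exact absurd hy (not_top_lt)

lemma affine_minorant {g : E → EReal} (hbot : ∀ x, g x ≠ ⊥) (hfin : ∃ x, g x ≠ ⊤)
    (hconv : ERealConvexOn g) (hlsc : LowerSemicontinuous g) :
    ∃ (u : E →L[ℝ] ℝ) (c : ℝ), ∀ x, ((u x - c : ℝ) : EReal) ≤ g x := by
  obtain ⟨x₁, hx₁⟩ := hfin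
  set γ₁ := (g x₁).toReal with hγ₁
  have hgx₁ : g x₁ = ((γ₁ : ℝ) : EReal) := (EReal.coe_toReal hx₁ (hbot x₁)).symm
  set Epi : Set (E × ℝ) := {p | g p.1 ≤ ((p.2 : ℝ) : EReal)} with hEpi
  have hconvEpi : Convex ℝ Epi := by
    rintro ⟨x, t⟩ hx ⟨y, u⟩ hy a b ha hb hab
    simp only [hEpi, Set.mem_setOf_eq] at hx hy ⊢
    have hgx : g x ≠ ⊤ := fun h => by simp [h] at hx
    have hgy : g y ≠ ⊤ := fun h => by simp [h] at hy
    have hgx' : g x = (((g x).toReal : ℝ) : EReal) := (EReal.coe_toReal hgx (hbot x)).symm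
    have hgy' : g y = (((g y).toReal : ℝ) : EReal) := (EReal.coe_toReal hgy (hbot y)).symm
    have hxr : (g x).toReal ≤ t := by rw [hgx'] at hx; exact_mod_cast hx
    have hyr : (g y).toReal ≤ u := by rw [hgy'] at hy; exact_mod_cast hy
    calc g (a • x + b • y) ≤ (a : EReal) * g x + (b : EReal) * g y :=
          hconv x y a b ha hb hab
      _ = (((a * (g x).toReal + b * (g y).toReal : ℝ)) : EReal) := by
          rw [hgx', hgy']; exact_mod_cast (EReal.coe_add _ _).symm
      _ ≤ ((a * t + b * u : ℝ) : EReal) := by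
          exact_mod_cast add_le_add (mul_le_mul_of_nonneg_left hxr ha)
            (mul_le_mul_of_nonneg_left hyr hb)
  have hclosedEpi : IsClosed Epi := by
    rw [← isOpen_compl_iff, isOpen_iff_mem_nhds]
    rintro ⟨x, t⟩ hp
    simp only [hEpi, Set.mem_compl_iff, Set.mem_setOf_eq, not_le] at hp
    obtain ⟨r, hr1, hr2⟩ := EReal.exists_between_coe_real hp
    have h1 : ∀ᶠ z in nhds x, ((r : ℝ) : EReal) < g z := hlsc x _ hr2
    have h2 : ∀ᶠ u in nhds t, u < r := eventually_lt_nhds (by exact_mod_cast hr1)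
    rw [nhds_prod_eq]
    refine Filter.mem_of_superset (Filter.prod_mem_prod h1 h2) ?_
    rintro ⟨z, u⟩ ⟨hz, hu⟩
    simp only [hEpi, Set.mem_compl_iff, Set.mem_setOf_eq, not_le]
    calc ((u : ℝ) : EReal) < ((r : ℝ) : EReal) := by exact_mod_cast hu
      _ < g z := hz
  have hnot : (x₁, γ₁ - 1) ∉ Epi := by
    simp only [hEpi, Set.mem_setOf_eq, not_le, hgx₁]
    exact_mod_cast (by linarith : γ₁ - 1 < γ₁)
  obtain ⟨f, u, hfu, hEpif⟩ := geometric_hahn_banach_point_closed hconvEpi hclosedEpi hnot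
  set ℓ := f.comp (ContinuousLinearMap.inl ℝ E ℝ) with hℓ
  set r := f (0, 1) with hr
  have hdecomp : ∀ (x : E) (t : ℝ), f (x, t) = ℓ x + t * r := by
    intro x t
    have : (x, t) = (x, (0:ℝ)) + t • ((0:E), (1:ℝ)) := by simp [Prod.ext_iff]
    rw [this, map_add, map_smul]
    simp [hℓ, hr, ContinuousLinearMap.inl_apply]
  have hmem₁ : (x₁, γ₁) ∈ Epi := by simp [hEpi, hgx₁]
  have h₁ := hEpif _ hmem₁
  rw [hdecomp] at h₁ hfu
  have hrpos : 0 < r := by nlinarith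
  refine ⟨(-r⁻¹) • ℓ, -(u / r), fun x => ?_⟩
  rcases eq_or_ne (g x) ⊤ with hx | hx
  · rw [hx]; exact le_top
  have hgx' : g x = (((g x).toReal : ℝ) : EReal) := (EReal.coe_toReal hx (hbot x)).symm
  have hmem : (x, (g x).toReal) ∈ Epi := hgx'.le
  have h₂ := hEpif _ hmem
  rw [hdecomp] at h₂
  rw [hgx']
  have hrne : r ≠ 0 := ne_of_gt hrpos
  have h4 : (u - ℓ x) / r ≤ (g x).toReal := (div_le_iff₀ hrpos).2 (by nlinarith)
  have h5 : ((-r⁻¹) • ℓ) x - -(u / r) = (u - ℓ x) / r := by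
    simp only [ContinuousLinearMap.smul_apply, smul_eq_mul]
    field_simp
    ring
  exact_mod_cast h5 ▸ h4

variable [CompleteSpace E] in

/-- Ekeland-type variational principle for `EReal`-valued lsc functions bounded below. -/
lemma ekeland_ereal {f : E → EReal} (hlsc : LowerSemicontinuous f) {B : ℝ}
    (hB : ∀ x, ((B : ℝ) : EReal) ≤ f x) {x₀ : E} (h₀ : f x₀ ≠ ⊤) {δ : ℝ} (hδ : 0 < δ) :
    ∃ s : E, f s ≤ f x₀ ∧ ∀ x, f s ≤ f x + ((δ * ‖x - s‖ : ℝ) : EReal) := by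
  classical
  set S : E → Set E := fun x => {y | f y + ((δ * ‖y - x‖ : ℝ) : EReal) ≤ f x} with hS
  have hbot : ∀ x, f x ≠ ⊥ := fun x h => by simpa [h] using (hB x).trans_eq h
  have hself : ∀ x, x ∈ S x := by
    intro x; simp [hS]
  have htrans : ∀ x y z, y ∈ S x → z ∈ S y → z ∈ S x := by
    intro x y z hy hz
    simp only [hS, Set.mem_setOf_eq] at *
    have tri : δ * ‖z - x‖ ≤ δ * ‖z - y‖ + δ * ‖y - x‖ := by
      rw [← mul_add]
      exact mul_le_mul_of_nonneg_left (by
        simpa using norm_sub_le_norm_sub_add_norm_sub z y x) hδ.le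
    calc f z + ((δ * ‖z - x‖ : ℝ) : EReal)
        ≤ f z + ((δ * ‖z - y‖ + δ * ‖y - x‖ : ℝ) : EReal) :=
          add_le_add_right (by exact_mod_cast tri) _
      _ = (f z + ((δ * ‖z - y‖ : ℝ) : EReal)) + ((δ * ‖y - x‖ : ℝ) : EReal) := by
          rw [EReal.coe_add, add_assoc]
      _ ≤ f y + ((δ * ‖y - x‖ : ℝ) : EReal) := add_le_add_left hz _
      _ ≤ f x := hy
  -- members of S x have value ≤ f x
  have hSle : ∀ x y, y ∈ S x → f y ≤ f x := by
    intro x y hy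
    refine le_trans ?_ hy
    nth_rewrite 1 [← add_zero (f y)]
    refine add_le_add_right ?_ _
    exact_mod_cast mul_nonneg hδ.le (norm_nonneg _)
  -- step: near-infimum choice in S x
  have hstep : ∀ (n : ℕ) (x : E), f x ≠ ⊤ →
      ∃ y, y ∈ S x ∧ ∀ z ∈ S x, f y ≤ f z + (((n+1:ℝ)⁻¹ : ℝ) : EReal) := by
    intro n x hx
    set I := sInf (f '' S x) with hI
    have hIub : I ≤ f x := sInf_le ⟨x, hself x, rfl⟩
    have hIlb : ((B : ℝ) : EReal) ≤ I := le_sInf (by rintro _ ⟨y, -, rfl⟩; exact hB y)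
    have hIbot : I ≠ ⊥ := fun h => by simpa [h] using hIlb.trans_eq h
    have hItop : I ≠ ⊤ := fun h => hx (top_le_iff.1 (h ▸ hIub))
    have hIr : I = ((I.toReal : ℝ) : EReal) := (EReal.coe_toReal hItop hIbot).symm
    have hlt : I < ((I.toReal + (n+1:ℝ)⁻¹ : ℝ) : EReal) := by
      rw [hIr]
      exact_mod_cast lt_add_of_pos_right _ (by positivity : (0:ℝ) < (n+1:ℝ)⁻¹)
    obtain ⟨_, ⟨y, hyS, rfl⟩, hy⟩ := sInf_lt_iff.1 hlt
    refine ⟨y, hyS, fun z hz => ?_⟩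
    have hzI : I ≤ f z := sInf_le ⟨z, hz, rfl⟩
    calc f y ≤ ((I.toReal + (n+1:ℝ)⁻¹ : ℝ) : EReal) := hy.le
      _ = ((I.toReal : ℝ) : EReal) + (((n+1:ℝ)⁻¹ : ℝ) : EReal) := EReal.coe_add _ _
      _ ≤ f z + (((n+1:ℝ)⁻¹ : ℝ) : EReal) := add_le_add_left (hIr ▸ hzI) _
  choose step hstep₁ hstep₂ using hstep
  -- the sequence
  set seq : ℕ → E := fun n => Nat.rec x₀ (fun n x => if h : f x ≠ ⊤ then step n x h else x) n
    with hseq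
  have hseq_succ : ∀ n, seq (n+1) = if h : f (seq n) ≠ ⊤ then step n (seq n) h else seq n := by
    intro n; rfl
  have hfin : ∀ n, f (seq n) ≠ ⊤ := by
    intro n
    induction n with
    | zero => exact h₀
    | succ n ih =>
      rw [hseq_succ, dif_pos ih]
      intro h
      exact ih (top_le_iff.1 (h ▸ hSle _ _ (hstep₁ n (seq n) ih)))
  have hmem : ∀ n, seq (n+1) ∈ S (seq n) := by
    intro n
    rw [hseq_succ, dif_pos (hfin n)]
    exact hstep₁ n (seq n) (hfin n)
  have hnear : ∀ n, ∀ z ∈ S (seq n), f (seq (n+1)) ≤ f z + (((n+1:ℝ)⁻¹ : ℝ) : EReal) := by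
    intro n
    rw [hseq_succ, dif_pos (hfin n)]
    exact hstep₂ n (seq n) (hfin n)
  have hchain : ∀ n m, n ≤ m → seq m ∈ S (seq n) := by
    intro n m hnm
    induction m with
    | zero => rw [Nat.le_zero.1 hnm]; exact hself _
    | succ m ih =>
      rcases Nat.lt_or_ge n (m+1) with h | h
      · exact htrans _ _ _ (ih (Nat.lt_succ_iff.1 h)) (hmem m)
      · rw [Nat.le_antisymm hnm h]; exact hself _
  -- real values
  set a : ℕ → ℝ := fun n => (f (seq n)).toReal with ha
  have hfr : ∀ n, f (seq n) = ((a n : ℝ) : EReal) := fun n =>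
    (EReal.coe_toReal (hfin n) (hbot _)).symm
  have hchain' : ∀ n m, n ≤ m → a m + δ * ‖seq m - seq n‖ ≤ a n := by
    intro n m hnm
    have := hchain n m hnm
    simp only [hS, Set.mem_setOf_eq] at this
    rw [hfr n, hfr m, ← EReal.coe_add] at this
    exact_mod_cast this
  have hanti : Antitone a := by
    intro n m hnm
    have := hchain' n m hnm
    nlinarith [mul_nonneg hδ.le (norm_nonneg (seq m - seq n))]
  have hbdd : BddBelow (Set.range a) := by
    refine ⟨B, ?_⟩
    rintro _ ⟨n, rfl⟩
    have := hB (seq n)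
    rw [hfr n] at this
    exact_mod_cast this
  set α := ⨅ n, a n with hα
  have halim : Tendsto a atTop (nhds α) := tendsto_atTop_ciInf hanti hbdd
  have hαle : ∀ n, α ≤ a n := fun n => ciInf_le hbdd n
  -- Cauchy
  have hcauchy : CauchySeq seq := by
    refine cauchySeq_of_le_tendsto_0 (fun n => (a n - α) / δ) (fun n m N hn hm => ?_) ?_
    · rcases le_total n m with h | h
      · have := hchain' n m h
        rw [dist_eq_norm]
        have h2 : ‖seq n - seq m‖ = ‖seq m - seq n‖ := norm_sub_rev _ _
        rw [h2, le_div_iff₀ hδ]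
        have := hαle m
        have han := hanti hn
        nlinarith
      · have := hchain' m n h
        rw [dist_eq_norm, le_div_iff₀ hδ]
        have := hαle n
        have ham := hanti hm
        nlinarith
    · have : Tendsto (fun n => a n - α) atTop (nhds 0) := by
        simpa using halim.sub_const α
      simpa using this.div_const δ
  obtain ⟨s, hs⟩ := cauchySeq_tendsto_of_complete hcauchy
  -- f s ≤ α
  have hfsα : f s ≤ ((α : ℝ) : EReal) := by
    by_contra h
    push_neg at h
    obtain ⟨y, hy1, hy2⟩ := EReal.exists_between_coe_real h
    have h1 : ∀ᶠ n in atTop, ((y : ℝ) : EReal) < f (seq n) := hs.eventually (hlsc s _ hy2)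
    have hαy : α < y := by exact_mod_cast hy1
    have h2 : ∀ᶠ n in atTop, a n < y := halim.eventually (eventually_lt_nhds hαy)
    obtain ⟨n, hn1, hn2⟩ := (h1.and h2).exists
    rw [hfr n] at hn1
    have : y < a n := by exact_mod_cast hn1
    linarith
  have hfstop : f s ≠ ⊤ := fun h => by simp [h] at hfsα
  set σ := (f s).toReal with hσ
  have hfs : f s = ((σ : ℝ) : EReal) := (EReal.coe_toReal hfstop (hbot s)).symm
  have hσα : σ ≤ α := by rw [hfs] at hfsα; exact_mod_cast hfsα
  -- s ∈ S (seq n) for all n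
  have hsS : ∀ n, s ∈ S (seq n) := by
    intro n
    have hnorm : Tendsto (fun m => ‖seq m - seq n‖) atTop (nhds ‖s - seq n‖) :=
      ((hs.sub_const (seq n)).norm)
    have hnle : ‖s - seq n‖ ≤ (a n - α) / δ := by
      refine le_of_tendsto hnorm ?_
      filter_upwards [eventually_ge_atTop n] with m hm
      rw [le_div_iff₀ hδ]
      have := hchain' n m hm
      have := hαle m
      nlinarith
    simp only [hS, Set.mem_setOf_eq]
    rw [hfs, hfr n, ← EReal.coe_add]
    have : σ + δ * ‖s - seq n‖ ≤ a n := by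
      rw [le_div_iff₀ hδ] at hnle
      nlinarith
    exact_mod_cast this
  refine ⟨s, ?_, ?_⟩
  · have h0 : s ∈ S x₀ := hsS 0
    exact hSle x₀ s h0
  · intro x
    by_cases hx : x ∈ S s
    · -- then x ∈ S (seq n) for all n, so f x ≥ α, forcing x = s
      have hxn : ∀ n, x ∈ S (seq n) := fun n => htrans _ _ _ (hsS n) hx
      have hfxle : f x ≤ f s := hSle s x hx
      have hfxtop : f x ≠ ⊤ := fun h => hfstop (top_le_iff.1 (h ▸ hfxle))
      set ξ := (f x).toReal with hξ
      have hfx : f x = ((ξ : ℝ) : EReal) := (EReal.coe_toReal hfxtop (hbot x)).symm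
      have hkey : ∀ n : ℕ, a (n+1) ≤ ξ + (n+1:ℝ)⁻¹ := by
        intro n
        have := hnear n x (hxn n)
        rw [hfr (n+1), hfx, ← EReal.coe_add] at this
        exact_mod_cast this
      have hαξ : α ≤ ξ := by
        refine le_of_forall_pos_le_add fun ε hε => ?_
        obtain ⟨n, hn⟩ := exists_nat_gt ε⁻¹
        have hn1 : (n+1:ℝ)⁻¹ < ε := by
          rw [inv_lt_comm₀ (by positivity) hε]
          linarith
        have := hkey n
        have := hαle (n+1)
        linarith
      -- x ∈ S s gives ξ + δ‖x - s‖ ≤ σ ≤ α ≤ ξ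
      have hxs : ξ + δ * ‖x - s‖ ≤ σ := by
        simp only [hS, Set.mem_setOf_eq] at hx
        rw [hfs, hfx, ← EReal.coe_add] at hx
        exact_mod_cast hx
      have hnorm0 : ‖x - s‖ = 0 := by
        have h1 : 0 ≤ δ * ‖x - s‖ := mul_nonneg hδ.le (norm_nonneg _)
        have h2 : δ * ‖x - s‖ ≤ 0 := by linarith
        have := mul_nonneg hδ.le (norm_nonneg (x - s))
        nlinarith [norm_nonneg (x - s)]
      have hxe : x = s := by
        rwa [norm_sub_eq_zero_iff] at hnorm0
      rw [hxe]
      nth_rewrite 1 [← add_zero (f s)]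
      refine add_le_add_right ?_ _
      exact_mod_cast mul_nonneg hδ.le (norm_nonneg _)
    · simp only [hS, Set.mem_setOf_eq, not_le] at hx
      exact hx.le


/-- If `s` minimizes `g + φ` with `g` proper convex (`EReal`-valued) and `φ` continuous
convex real-valued, then there is `L` with `L ∈ ∂g(s)` and `-L ∈ ∂φ(s)`. -/
lemma sandwich_subgradient {g : E → EReal} (hbot : ∀ x, g x ≠ ⊥) (hconv : ERealConvexOn g)
    {φ : E → ℝ} (hφc : Continuous φ)
    (hφconv : ∀ x y : E, ∀ a b : ℝ, 0 ≤ a → 0 ≤ b → a + b = 1 →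
      φ (a • x + b • y) ≤ a * φ x + b * φ y)
    {s : E} (hs : g s ≠ ⊤)
    (hmin : ∀ x, g s + ((φ s : ℝ) : EReal) ≤ g x + ((φ x : ℝ) : EReal)) :
    ∃ L : E →L[ℝ] ℝ,
      (∀ x ρ, g x = ((ρ : ℝ) : EReal) → (g s).toReal + L (x - s) ≤ ρ) ∧
      (∀ x, φ s - L (x - s) ≤ φ x) := by
  set γ := (g s).toReal with hγ
  have hgs : g s = ((γ : ℝ) : EReal) := (EReal.coe_toReal hs (hbot s)).symm
  set A : Set (E × ℝ) := {p | g p.1 ≤ ((γ + p.2 : ℝ) : EReal)} with hA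
  set Bo : Set (E × ℝ) := {p | p.2 < φ s - φ p.1} with hB
  have hAconv : Convex ℝ A := by
    rintro ⟨x, t⟩ hx ⟨y, u⟩ hy a b ha hb hab
    simp only [hA, Set.mem_setOf_eq] at hx hy ⊢
    have hgx : g x ≠ ⊤ := ne_top_of_le_ne_top (EReal.coe_ne_top _) hx
    have hgy : g y ≠ ⊤ := ne_top_of_le_ne_top (EReal.coe_ne_top _) hy
    have hgx' : g x = (((g x).toReal : ℝ) : EReal) := (EReal.coe_toReal hgx (hbot x)).symm
    have hgy' : g y = (((g y).toReal : ℝ) : EReal) := (EReal.coe_toReal hgy (hbot y)).symm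
    have hxr : (g x).toReal ≤ γ + t := by rw [hgx'] at hx; exact_mod_cast hx
    have hyr : (g y).toReal ≤ γ + u := by rw [hgy'] at hy; exact_mod_cast hy
    calc g (a • x + b • y) ≤ (a : EReal) * g x + (b : EReal) * g y := hconv x y a b ha hb hab
      _ = (((a * (g x).toReal + b * (g y).toReal : ℝ)) : EReal) := by
          rw [hgx', hgy']; exact_mod_cast (EReal.coe_add _ _).symm
      _ ≤ ((γ + (a * t + b * u) : ℝ) : EReal) := by
          have : a * (g x).toReal + b * (g y).toReal ≤ γ + (a * t + b * u) := by
            have h1 := mul_le_mul_of_nonneg_left hxr ha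
            have h2 := mul_le_mul_of_nonneg_left hyr hb
            have h3 : a * γ + b * γ = γ := by rw [← add_mul, hab, one_mul]
            linarith
          exact_mod_cast this
  have hBconv : Convex ℝ Bo := by
    rintro ⟨x, t⟩ hx ⟨y, u⟩ hy a b ha hb hab
    simp only [hB, Set.mem_setOf_eq, Prod.smul_mk, Prod.mk_add_mk, smul_eq_mul] at hx hy ⊢
    have hφ1 := hφconv x y a b ha hb hab
    have h3 : a * t + b * u < a * (φ s - φ x) + b * (φ s - φ y) := by
      rcases ha.lt_or_eq with ha' | ha'
      · exact add_lt_add_of_lt_of_le (mul_lt_mul_of_pos_left hx ha')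
          (mul_le_mul_of_nonneg_left hy.le hb)
      · have hb1 : b = 1 := by linarith
        rw [← ha', hb1]
        simpa using hy
    have h4 : a * (φ s - φ x) + b * (φ s - φ y) = (a + b) * φ s - (a * φ x + b * φ y) := by ring
    rw [hab, one_mul] at h4
    linarith
  have hBopen : IsOpen Bo := by
    have : Bo = {p : E × ℝ | p.2 < (fun p : E × ℝ => φ s - φ p.1) p} := rfl
    exact isOpen_lt continuous_snd (continuous_const.sub (hφc.comp continuous_fst))
  have hdisj : Disjoint Bo A := by
    rw [Set.disjoint_left]
    rintro ⟨x, t⟩ hxB hxA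
    simp only [hA, hB, Set.mem_setOf_eq] at hxB hxA
    have hgx : g x ≠ ⊤ := ne_top_of_le_ne_top (EReal.coe_ne_top _) hxA
    have hgx' : g x = (((g x).toReal : ℝ) : EReal) := (EReal.coe_toReal hgx (hbot x)).symm
    have hxr : (g x).toReal ≤ γ + t := by rw [hgx'] at hxA; exact_mod_cast hxA
    have := hmin x
    rw [hgs, hgx', ← EReal.coe_add, ← EReal.coe_add] at this
    have hmin' : γ + φ s ≤ (g x).toReal + φ x := by exact_mod_cast this
    linarith
  obtain ⟨f, u, hBf, hAf⟩ := geometric_hahn_banach_open hBconv hBopen hAconv hdisj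
  set ℓ := f.comp (ContinuousLinearMap.inl ℝ E ℝ) with hℓ
  set r := f (0, 1) with hr
  have hdecomp : ∀ (x : E) (t : ℝ), f (x, t) = ℓ x + t * r := by
    intro x t
    have : (x, t) = (x, (0:ℝ)) + t • ((0:E), (1:ℝ)) := by simp [Prod.ext_iff]
    rw [this, map_add, map_smul]
    simp [hℓ, hr, ContinuousLinearMap.inl_apply]
  have hmemA0 : ((s, (0:ℝ)) : E × ℝ) ∈ A := by
    simp only [hA, Set.mem_setOf_eq, add_zero]
    exact hgs.le
  have hmemB1 : ((s, (-1:ℝ)) : E × ℝ) ∈ Bo := by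
    simp only [hB, Set.mem_setOf_eq, sub_self]
    norm_num
  have h1 := hAf _ hmemA0
  have h2 := hBf _ hmemB1
  rw [hdecomp] at h1 h2
  simp only [zero_mul, add_zero, neg_one_mul] at h1 h2
  have hrpos : 0 < r := by linarith
  -- key inequalities
  have hkeyB : ∀ x : E, ℓ x + r * (φ s - φ x) ≤ u := by
    intro x
    refine le_of_forall_pos_le_add fun ε hε => ?_
    have hmem : ((x, φ s - φ x - ε / r) : E × ℝ) ∈ Bo := by
      simp only [hB, Set.mem_setOf_eq]
      have : 0 < ε / r := div_pos hε hrpos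
      linarith
    have := hBf _ hmem
    rw [hdecomp] at this
    have hrne : r ≠ 0 := ne_of_gt hrpos
    have : ℓ x + (φ s - φ x) * r - ε < u := by
      field_simp at this ⊢
      linarith
    linarith [this]
  have hkeyA : ∀ x ρ, g x = ((ρ : ℝ) : EReal) → u ≤ ℓ x + r * (ρ - γ) := by
    intro x ρ hx
    have hmem : ((x, ρ - γ) : E × ℝ) ∈ A := by
      simp only [hA, Set.mem_setOf_eq, hx]
      exact_mod_cast le_of_eq (by ring)
    have := hAf _ hmem
    rw [hdecomp] at this
    linarith
  -- u = ℓ s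
  have hu1 : ℓ s ≤ u := by have := hkeyB s; simpa using this
  have hu2 : u ≤ ℓ s := by have := hkeyA s γ hgs; simpa using this
  have huls : u = ℓ s := le_antisymm hu2 hu1
  refine ⟨(-r⁻¹) • ℓ, fun x ρ hx => ?_, fun x => ?_⟩
  · have hthis := hkeyA x ρ hx
    rw [huls] at hthis
    simp only [ContinuousLinearMap.smul_apply, map_sub, smul_eq_mul]
    have hrne : r ≠ 0 := ne_of_gt hrpos
    have h5 : (ℓ s - ℓ x) / r ≤ ρ - γ := (div_le_iff₀ hrpos).2 (by linarith)
    have h6 : -r⁻¹ * (ℓ x - ℓ s) = (ℓ s - ℓ x) / r := by field_simp; ring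
    linarith
  · have hthis := hkeyB x
    rw [huls] at hthis
    simp only [ContinuousLinearMap.smul_apply, map_sub, smul_eq_mul]
    have hrne : r ≠ 0 := ne_of_gt hrpos
    have h5 : φ s - φ x ≤ (ℓ s - ℓ x) / r := (le_div_iff₀ hrpos).2 (by linarith)
    have h6 : -r⁻¹ * (ℓ x - ℓ s) = (ℓ s - ℓ x) / r := by field_simp; ring
    linarith

end AuxProof

set_option maxHeartbeats 1000000 in
/-- If `g` is proper, convex and lower semicontinuous on a nonzero real
Banach space and `ε > 0`, then there is `(s,s*) ∈ G(∂g)` with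
`½‖s‖² + ⟨s,s*⟩ + ½‖s*‖² < ε`. -/
theorem exists_subdiff_small
    {E : Type*} [NormedAddCommGroup E] [NormedSpace ℝ E] [CompleteSpace E] [Nontrivial E]
    (g : E → EReal) (hproper : ERealProper g) (hconv : ERealConvexOn g)
    (hlsc : LowerSemicontinuous g) (ε : ℝ) (hε : 0 < ε) :
    ∃ p ∈ subdiffGraph g, 2⁻¹ * ‖p.1‖ ^ 2 + p.2 p.1 + 2⁻¹ * ‖p.2‖ ^ 2 < ε := by
  classical
  obtain ⟨hbot, hfin⟩ := hproper
  obtain ⟨u, c, haff⟩ := affine_minorant hbot hfin hconv hlsc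
  obtain ⟨x₀, hx₀⟩ := hfin
  set h : E → EReal := fun x => g x + ((2⁻¹ * ‖x‖ ^ 2 : ℝ) : EReal) with hh
  clear_value h
  have hsq : Continuous fun x : E => (2⁻¹ * ‖x‖ ^ 2 : ℝ) :=
    continuous_const.mul (continuous_norm.pow 2)
  have hlsch : LowerSemicontinuous h := by
    rw [hh]; exact lsc_add_cont hbot hlsc hsq
  have hBle : ∀ x, ((-c - 2⁻¹ * ‖u‖ ^ 2 : ℝ) : EReal) ≤ h x := by
    intro x
    rw [hh]
    show ((-c - 2⁻¹ * ‖u‖ ^ 2 : ℝ) : EReal) ≤ g x + ((2⁻¹ * ‖x‖ ^ 2 : ℝ) : EReal)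
    have h1 : ((u x - c : ℝ) : EReal) ≤ g x := haff x
    have h2 : -(‖u‖ * ‖x‖) ≤ u x := by
      have h := u.le_opNorm x
      rw [Real.norm_eq_abs] at h
      linarith [(abs_le.1 h).1]
    have h3 : -c - 2⁻¹ * ‖u‖ ^ 2 ≤ u x - c + 2⁻¹ * ‖x‖ ^ 2 := by
      nlinarith [sq_nonneg (‖x‖ - ‖u‖)]
    calc ((-c - 2⁻¹ * ‖u‖ ^ 2 : ℝ) : EReal)
        ≤ ((u x - c + 2⁻¹ * ‖x‖ ^ 2 : ℝ) : EReal) := by exact_mod_cast h3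
      _ = ((u x - c : ℝ) : EReal) + ((2⁻¹ * ‖x‖ ^ 2 : ℝ) : EReal) := EReal.coe_add _ _
      _ ≤ g x + ((2⁻¹ * ‖x‖ ^ 2 : ℝ) : EReal) := add_le_add_left h1 _
  have hx₀top : h x₀ ≠ ⊤ := by
    rw [hh]
    exact (EReal.add_lt_top hx₀ (EReal.coe_ne_top _)).ne
  obtain ⟨γ₀, hgx₀⟩ : ∃ γ₀ : ℝ, g x₀ = ((γ₀ : ℝ) : EReal) :=
    ⟨(g x₀).toReal, (EReal.coe_toReal hx₀ (hbot x₀)).symm⟩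
  obtain ⟨M₀, hM₀⟩ : ∃ M₀ : ℝ, M₀ = γ₀ + 2⁻¹ * ‖x₀‖ ^ 2 := ⟨_, rfl⟩
  have hhx₀ : h x₀ = ((M₀ : ℝ) : EReal) := by
    rw [hh, hM₀]
    show g x₀ + ((2⁻¹ * ‖x₀‖ ^ 2 : ℝ) : EReal) = _
    rw [hgx₀]
    exact (EReal.coe_add _ _).symm
  obtain ⟨K, hK⟩ : ∃ K : ℝ, K = max (M₀ + c) 0 := ⟨_, rfl⟩
  have hK0 : 0 ≤ K := hK ▸ le_max_right _ _
  have hKM : M₀ + c ≤ K := hK ▸ le_max_left _ _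
  obtain ⟨R, hR⟩ : ∃ R : ℝ, R = 2 * ‖u‖ + 2 + K := ⟨_, rfl⟩
  have hR0 : 0 < R := by rw [hR]; positivity
  obtain ⟨δ, hδdef⟩ : ∃ δ : ℝ, δ = min 1 (ε / (2 * R + 2)) := ⟨_, rfl⟩
  have hδ : 0 < δ := by
    rw [hδdef]
    exact lt_min one_pos (div_pos hε (by linarith))
  have hδ1 : δ ≤ 1 := hδdef ▸ min_le_left _ _
  have hδε : δ * (2 * R + 2) ≤ ε := by
    have h1 : δ ≤ ε / (2 * R + 2) := hδdef ▸ min_le_right _ _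
    rw [← le_div_iff₀ (by linarith : (0:ℝ) < 2 * R + 2)]
    exact h1
  obtain ⟨s, hs1, hs2⟩ := ekeland_ereal hlsch hBle hx₀top hδ
  have hhs_top : h s ≠ ⊤ := fun ht => hx₀top (top_le_iff.1 (ht ▸ hs1))
  have hgs_top : g s ≠ ⊤ := by
    intro ht
    apply hhs_top
    rw [hh]
    show g s + ((2⁻¹ * ‖s‖ ^ 2 : ℝ) : EReal) = ⊤
    rw [ht]
    exact EReal.top_add_of_ne_bot (EReal.coe_ne_bot _)
  obtain ⟨γ, hgs⟩ : ∃ γ : ℝ, g s = ((γ : ℝ) : EReal) :=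
    ⟨(g s).toReal, (EReal.coe_toReal hgs_top (hbot s)).symm⟩
  -- bound on ‖s‖
  have hsR : ‖s‖ ≤ R := by
    have h1 : h s ≤ ((M₀ : ℝ) : EReal) := hhx₀ ▸ hs1
    have h2 : ((u s - c + 2⁻¹ * ‖s‖ ^ 2 : ℝ) : EReal) ≤ h s := by
      rw [hh]
      show _ ≤ g s + ((2⁻¹ * ‖s‖ ^ 2 : ℝ) : EReal)
      calc ((u s - c + 2⁻¹ * ‖s‖ ^ 2 : ℝ) : EReal)
          = ((u s - c : ℝ) : EReal) + ((2⁻¹ * ‖s‖ ^ 2 : ℝ) : EReal) := EReal.coe_add _ _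
        _ ≤ g s + ((2⁻¹ * ‖s‖ ^ 2 : ℝ) : EReal) := add_le_add_left (haff s) _
    have h3 : u s - c + 2⁻¹ * ‖s‖ ^ 2 ≤ M₀ := by exact_mod_cast h2.trans h1
    have h4 : -(‖u‖ * ‖s‖) ≤ u s := by
      have h := u.le_opNorm s
      rw [Real.norm_eq_abs] at h
      linarith [(abs_le.1 h).1]
    have h5 : 2⁻¹ * ‖s‖ ^ 2 ≤ ‖u‖ * ‖s‖ + K := by linarith
    by_contra hcon
    push_neg at hcon
    rw [hR] at hcon
    nlinarith [norm_nonneg u, norm_nonneg s, hR]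
  -- the perturbed convex function
  set φ : E → ℝ := fun x => 2⁻¹ * ‖x‖ ^ 2 + δ * ‖x - s‖ with hφ
  clear_value φ
  have hφc : Continuous φ := by
    rw [hφ]
    exact hsq.add (continuous_const.mul ((continuous_id.sub continuous_const).norm))
  have hφs : φ s = 2⁻¹ * ‖s‖ ^ 2 := by rw [hφ]; simp
  have hφconv : ∀ x y : E, ∀ a b : ℝ, 0 ≤ a → 0 ≤ b → a + b = 1 →
      φ (a • x + b • y) ≤ a * φ x + b * φ y := by
    intro x y a b ha hb hab
    rw [hφ]
    simp only
    have hn1 : ‖a • x + b • y‖ ≤ a * ‖x‖ + b * ‖y‖ := by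
      calc ‖a • x + b • y‖ ≤ ‖a • x‖ + ‖b • y‖ := norm_add_le _ _
        _ = a * ‖x‖ + b * ‖y‖ := by rw [norm_smul, norm_smul, Real.norm_of_nonneg ha,
            Real.norm_of_nonneg hb]
    have hn2 : ‖a • x + b • y - s‖ ≤ a * ‖x - s‖ + b * ‖y - s‖ := by
      have he : a • (x - s) + b • (y - s) = a • x + b • y - (a + b) • s := by
        rw [add_smul, smul_sub, smul_sub]
        abel
      rw [hab, one_smul] at he
      rw [← he]
      calc ‖a • (x - s) + b • (y - s)‖ ≤ ‖a • (x - s)‖ + ‖b • (y - s)‖ := norm_add_le _ _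
        _ = a * ‖x - s‖ + b * ‖y - s‖ := by rw [norm_smul, norm_smul,
            Real.norm_of_nonneg ha, Real.norm_of_nonneg hb]
    have hsq2 : 2⁻¹ * ‖a • x + b • y‖ ^ 2 ≤ a * (2⁻¹ * ‖x‖ ^ 2) + b * (2⁻¹ * ‖y‖ ^ 2) :=
      sq_convex_aux ha hb hab (norm_nonneg _) (norm_nonneg _) (norm_nonneg _) hn1
    nlinarith [mul_le_mul_of_nonneg_left hn2 hδ.le]
  have hminφ : ∀ x, g s + ((φ s : ℝ) : EReal) ≤ g x + ((φ x : ℝ) : EReal) := by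
    intro x
    have hthis := hs2 x
    rw [hh] at hthis
    simp only at hthis
    have hφx : φ x = 2⁻¹ * ‖x‖ ^ 2 + δ * ‖x - s‖ := by rw [hφ]
    calc g s + ((φ s : ℝ) : EReal) = g s + ((2⁻¹ * ‖s‖ ^ 2 : ℝ) : EReal) := by rw [hφs]
      _ ≤ (g x + ((2⁻¹ * ‖x‖ ^ 2 : ℝ) : EReal)) + ((δ * ‖x - s‖ : ℝ) : EReal) := hthis
      _ = g x + ((φ x : ℝ) : EReal) := by
          rw [add_assoc, ← EReal.coe_add, hφx]
  have hgs_top' : g s ≠ ⊤ := hgs_top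
  obtain ⟨L, hL1, hL2⟩ := sandwich_subgradient hbot hconv hφc hφconv hgs_top hminφ
  have hγeq : (g s).toReal = γ := by rw [hgs]; exact EReal.toReal_coe γ
  rw [hγeq] at hL1
  -- membership in the subdifferential graph
  have hconj : fnConj g L = ((L s - γ : ℝ) : EReal) := by
    refine le_antisymm (iSup_le fun x => ?_) ?_
    · rcases eq_or_ne (g x) ⊤ with hx | hx
      · rw [hx]
        simp
      · have hgx : g x = (((g x).toReal : ℝ) : EReal) := (EReal.coe_toReal hx (hbot x)).symm
        have hthis := hL1 x (g x).toReal hgx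
        rw [map_sub] at hthis
        rw [hgx, ← EReal.coe_sub]
        exact_mod_cast (by linarith : L x - (g x).toReal ≤ L s - γ)
    · have hthis : ((L s : ℝ) : EReal) - g s = ((L s - γ : ℝ) : EReal) := by
        rw [hgs, ← EReal.coe_sub]
      exact hthis ▸ le_iSup (fun x => ((L x : ℝ) : EReal) - g x) s
  have hmem : ((s, L) : E × StrongDual ℝ E) ∈ subdiffGraph g := by
    simp only [subdiffGraph, Set.mem_setOf_eq]
    rw [hconj, hgs, ← EReal.coe_add]
    norm_num
  refine ⟨(s, L), hmem, ?_⟩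
  -- estimates
  have hb1 : ∀ v : E, -L v ≤ ‖v‖ * (‖s‖ + δ) + 2⁻¹ * ‖v‖ ^ 2 := by
    intro v
    have hthis := hL2 (s + v)
    rw [map_sub] at hthis
    have hLsv : L (s + v) - L s = L v := by rw [map_add]; ring
    rw [hLsv, hφs] at hthis
    have hφsv : φ (s + v) = 2⁻¹ * ‖s + v‖ ^ 2 + δ * ‖v‖ := by
      rw [hφ]
      simp only [add_sub_cancel_left]
    rw [hφsv] at hthis
    have hna : ‖s + v‖ ≤ ‖s‖ + ‖v‖ := norm_add_le s v
    nlinarith [norm_nonneg (s + v), norm_nonneg s, norm_nonneg v,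
      mul_self_le_mul_self (norm_nonneg (s + v)) hna]
  have hLnorm : ‖L‖ ≤ ‖s‖ + δ := by
    refine le_of_forall_pos_le_add fun η hη => ?_
    refine L.opNorm_le_bound (by positivity) fun v => ?_
    rcases eq_or_ne v 0 with rfl | hv
    · simp
    · have hvn : 0 < ‖v‖ := norm_pos_iff.2 hv
      have key : ∀ w : E, ‖w‖ = 2 * η → -L w ≤ 2 * η * (‖s‖ + δ) + 2 * η ^ 2 := by
        intro w hw
        have hthis := hb1 w
        rw [hw] at hthis
        nlinarith
      have h1 : -L v ≤ (‖s‖ + δ + η) * ‖v‖ := by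
        have hw := key ((2 * η / ‖v‖) • v) (by
          rw [norm_smul, Real.norm_of_nonneg (by positivity)]
          field_simp)
        rw [map_smul, smul_eq_mul] at hw
        -- hw : -(2 * η / ‖v‖ * L v) ≤ 2 * η * (‖s‖ + δ) + 2 * η ^ 2
        have h2 : -L v * (2 * η) ≤ (2 * η * (‖s‖ + δ) + 2 * η ^ 2) * ‖v‖ := by
          have := mul_le_mul_of_nonneg_right hw hvn.le
          calc -L v * (2 * η) = -(2 * η / ‖v‖ * L v) * ‖v‖ := by
                field_simp [hvn.ne']
                try ring
            _ ≤ (2 * η * (‖s‖ + δ) + 2 * η ^ 2) * ‖v‖ := this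
        nlinarith
      have h1' : L v ≤ (‖s‖ + δ + η) * ‖v‖ := by
        have hw := key ((-(2 * η) / ‖v‖) • v) (by
          rw [norm_smul, Real.norm_eq_abs, abs_div, abs_neg,
            abs_of_nonneg (by positivity : (0:ℝ) ≤ 2 * η), abs_of_nonneg hvn.le]
          field_simp)
        rw [map_smul, smul_eq_mul] at hw
        have h2 : L v * (2 * η) ≤ (2 * η * (‖s‖ + δ) + 2 * η ^ 2) * ‖v‖ := by
          have := mul_le_mul_of_nonneg_right hw hvn.le
          calc L v * (2 * η) = -(-(2 * η) / ‖v‖ * L v) * ‖v‖ := by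
                field_simp [hvn.ne']
                try ring
            _ ≤ (2 * η * (‖s‖ + δ) + 2 * η ^ 2) * ‖v‖ := this
        nlinarith
      rw [Real.norm_eq_abs, abs_le]
      constructor <;> nlinarith
  have hLs : L s ≤ δ * ‖s‖ - ‖s‖ ^ 2 := by
    refine le_of_forall_pos_le_add fun η hη => ?_
    obtain ⟨t, ht⟩ : ∃ t : ℝ, t = min 1 (2 * η / (‖s‖ ^ 2 + 1)) := ⟨_, rfl⟩
    have ht0 : 0 < t := by rw [ht]; exact lt_min one_pos (by positivity)
    have ht1 : t ≤ 1 := ht ▸ min_le_left _ _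
    have htη : t * ‖s‖ ^ 2 ≤ 2 * η := by
      have h1 : t ≤ 2 * η / (‖s‖ ^ 2 + 1) := ht ▸ min_le_right _ _
      rw [le_div_iff₀ (by positivity)] at h1
      nlinarith [sq_nonneg (‖s‖)]
    have hthis := hL2 ((1 - t) • s)
    rw [map_sub] at hthis
    have he1 : L ((1 - t) • s) - L s = -t * L s := by
      rw [map_smul, smul_eq_mul]; ring
    rw [he1, hφs] at hthis
    have he2 : φ ((1 - t) • s) = 2⁻¹ * ((1 - t) * ‖s‖) ^ 2 + δ * (t * ‖s‖) := by
      rw [hφ]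
      simp only
      have e1 : ‖(1 - t) • s‖ = (1 - t) * ‖s‖ := by
        rw [norm_smul, Real.norm_of_nonneg (by linarith)]
      have e2 : ‖(1 - t) • s - s‖ = t * ‖s‖ := by
        have he3 : (1 - t) • s - s = (-t) • s := by
          rw [sub_smul, one_smul, neg_smul]
          abel
        rw [he3, norm_smul, Real.norm_eq_abs, abs_neg, abs_of_nonneg ht0.le]
      rw [e1, e2]
    rw [he2] at hthis
    -- hthis : ½‖s‖² - (-t * L s) ≤ ½((1-t)‖s‖)² + δ(t‖s‖)
    have hts : t * L s ≤ t * ((δ * ‖s‖ - ‖s‖ ^ 2) + η) := by nlinarith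
    have := (mul_le_mul_iff_right₀ ht0).1 hts
    linarith
  -- final computation
  show 2⁻¹ * ‖s‖ ^ 2 + L s + 2⁻¹ * ‖L‖ ^ 2 < ε
  have hnL : ‖L‖ ^ 2 ≤ (‖s‖ + δ) ^ 2 := by
    nlinarith [norm_nonneg L]
  have hQ : 2⁻¹ * ‖s‖ ^ 2 + L s + 2⁻¹ * ‖L‖ ^ 2 ≤ 2 * δ * ‖s‖ + 2⁻¹ * δ ^ 2 := by nlinarith
  have hfin2 : 2 * δ * ‖s‖ + 2⁻¹ * δ ^ 2 < ε := by nlinarith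
  linarith
end

section
/- Let E be a nonzero real Banach space and f : E → (−∞,∞] be proper, convex and lower semicontinuous. Then the subdifferential ∂f : E ⇉ E* is closed, monotone and quasidense. -/
open NormedSpace Filter

/-! ### EReal helpers -/

lemma ereal_add_real_le_real (z : EReal) (c a : ℝ) :
    z + (c : EReal) ≤ (a : EReal) ↔ z ≤ ((a - c : ℝ) : EReal) := by
  induction z using EReal.rec with
  | bot => simp
  | coe r =>
      rw [← EReal.coe_add, EReal.coe_le_coe_iff, EReal.coe_le_coe_iff]
      constructor <;> intro h <;> linarith
  | top =>
      rw [EReal.top_add_of_ne_bot (by simp)]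
      constructor <;> intro h
      · exact absurd h (by simp)
      · exact absurd (top_le_iff.1 h) (EReal.coe_ne_top _)

lemma ereal_ne_bot_of_real_le {z : EReal} {c : ℝ} (h : (c : EReal) ≤ z) : z ≠ ⊥ := by
  intro hz; rw [hz] at h; exact absurd h (by simp)

lemma ereal_eq_real {z : EReal} (h1 : z ≠ ⊥) (h2 : z ≠ ⊤) : z = ((z.toReal : ℝ) : EReal) :=
  (EReal.coe_toReal h2 h1).symm

/-- sublevel set of a lsc EReal function below a continuous real function is closed -/
lemma closed_sublevel {X : Type*} [TopologicalSpace X] {φ : X → EReal} {g : X → ℝ}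
    (hφ : LowerSemicontinuous φ) (hg : Continuous g) :
    IsClosed {y | φ y ≤ ((g y : ℝ) : EReal)} := by
  rw [← isOpen_compl_iff, isOpen_iff_mem_nhds]
  intro y hy
  simp only [Set.mem_compl_iff, Set.mem_setOf_eq, not_le] at hy
  obtain ⟨b, hb1, hb2⟩ := EReal.lt_iff_exists_real_btwn.1 hy
  rw [EReal.coe_lt_coe_iff] at hb1
  have h1 : ∀ᶠ z in nhds y, ((b : ℝ) : EReal) < φ z := hφ y _ hb2
  have h2 : ∀ᶠ z in nhds y, g z < b := (hg.continuousAt (x := y)).eventually_lt continuousAt_const hb1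
  filter_upwards [h1, h2] with z hz1 hz2
  simp only [Set.mem_compl_iff, Set.mem_setOf_eq, not_le]
  exact lt_trans (by exact_mod_cast hz2) hz1

lemma ereal_trichotomy (z : EReal) : z = ⊥ ∨ z = ⊤ ∨ ∃ v : ℝ, z = (v : EReal) := by
  induction z using EReal.rec with
  | bot => exact Or.inl rfl
  | top => exact Or.inr (Or.inl rfl)
  | coe v => exact Or.inr (Or.inr ⟨v, rfl⟩)


section char
variable {E : Type*} [NormedAddCommGroup E] [NormedSpace ℝ E]
  {f : E → EReal}

lemma mem_subdiffGraph_iff (hproper : ERealProper f) (p : E × StrongDual ℝ E) :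
    p ∈ subdiffGraph f ↔
      ∃ r : ℝ, f p.1 = (r : EReal) ∧
        ∀ y, ((r + (p.2 y - p.2 p.1) : ℝ) : EReal) ≤ f y := by
  obtain ⟨hbot, x₀, hx₀⟩ := hproper
  constructor
  · intro h
    simp only [subdiffGraph, Set.mem_setOf_eq] at h
    -- fnConj ≠ ⊥
    have hv₀ : f x₀ = ((f x₀).toReal : EReal) := (EReal.coe_toReal hx₀ (hbot x₀)).symm
    have hconjbot : fnConj f p.2 ≠ ⊥ := by
      have h1 : ((p.2 x₀ - (f x₀).toReal : ℝ) : EReal) ≤ fnConj f p.2 := by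
        have := le_iSup (fun x => (((p.2 x : ℝ) : EReal) - f x)) x₀
        rwa [hv₀, ← EReal.coe_sub] at this
      exact ereal_ne_bot_of_real_le h1
    have hfp1top : f p.1 ≠ ⊤ := by
      intro htop
      rw [htop, EReal.top_add_of_ne_bot hconjbot] at h
      exact (EReal.coe_ne_top _) h.symm
    have hconjtop : fnConj f p.2 ≠ ⊤ := by
      intro htop
      rw [htop, EReal.add_top_of_ne_bot (hbot p.1)] at h
      exact (EReal.coe_ne_top _) h.symm
    set r := (f p.1).toReal with hr
    set r' := (fnConj f p.2).toReal with hr'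
    have hfr : f p.1 = (r : EReal) := (EReal.coe_toReal hfp1top (hbot p.1)).symm
    have hcr : fnConj f p.2 = (r' : EReal) := (EReal.coe_toReal hconjtop hconjbot).symm
    have hsum : r + r' = p.2 p.1 := by
      rw [hfr, hcr, ← EReal.coe_add] at h
      exact_mod_cast h
    refine ⟨r, hfr, fun y => ?_⟩
    rcases ereal_trichotomy (f y) with hfy | hfy | ⟨v, hfy⟩
    · exact absurd hfy (hbot y)
    · exact hfy ▸ le_top
    · have h1 : ((p.2 y : ℝ) : EReal) - f y ≤ fnConj f p.2 :=
        le_iSup (fun x => (((p.2 x : ℝ) : EReal) - f x)) y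
      rw [hfy, hcr, ← EReal.coe_sub, EReal.coe_le_coe_iff] at h1
      rw [hfy, EReal.coe_le_coe_iff]
      linarith
  · rintro ⟨r, hfr, hineq⟩
    have hconj : fnConj f p.2 = ((p.2 p.1 - r : ℝ) : EReal) := by
      apply le_antisymm
      · apply iSup_le
        intro y
        rcases ereal_trichotomy (f y) with hfy | hfy | ⟨v, hfy⟩
        · exact absurd hfy (hbot y)
        · rw [hfy]; simp
        · rw [hfy, ← EReal.coe_sub, EReal.coe_le_coe_iff]
          have := hineq y
          rw [hfy, EReal.coe_le_coe_iff] at this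
          linarith
      · have := le_iSup (fun x => (((p.2 x : ℝ) : EReal) - f x)) p.1
        rwa [hfr, ← EReal.coe_sub] at this
    simp only [subdiffGraph, Set.mem_setOf_eq]
    rw [hfr, hconj, ← EReal.coe_add]
    norm_num
end char

section cm
variable {E : Type*} [NormedAddCommGroup E] [NormedSpace ℝ E] {f : E → EReal}

lemma subdiff_monotone (hproper : ERealProper f) : IsMonotoneGraph (subdiffGraph f) := by
  intro p hp q hq
  obtain ⟨rp, hrp, hip⟩ := (mem_subdiffGraph_iff hproper p).1 hp
  obtain ⟨rq, hrq, hiq⟩ := (mem_subdiffGraph_iff hproper q).1 hq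
  have h1 := hip q.1
  have h2 := hiq p.1
  rw [hrq, EReal.coe_le_coe_iff] at h1
  rw [hrp, EReal.coe_le_coe_iff] at h2
  simp only [ContinuousLinearMap.sub_apply, map_sub]
  linarith

lemma subdiff_closed (hproper : ERealProper f) (hlsc : LowerSemicontinuous f) :
    IsClosed (subdiffGraph f) := by
  apply IsSeqClosed.isClosed
  intro pn p hpn hlim
  have hev : Continuous (fun u : E × StrongDual ℝ E => u.2 u.1) :=
    isBoundedBilinearMap_apply.continuous.comp (continuous_snd.prodMk continuous_fst)
  have tend1 : Tendsto (fun n => (pn n).2 ((pn n).1)) atTop (nhds (p.2 p.1)) :=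
    ((hev.tendsto p).comp hlim)
  have tendfst : Tendsto (fun n => (pn n).1) atTop (nhds p.1) :=
    ((continuous_fst.tendsto p).comp hlim)
  have tendy : ∀ y : E, Tendsto (fun n => (pn n).2 y) atTop (nhds (p.2 y)) := by
    intro y
    have hcy : Continuous (fun u : E × StrongDual ℝ E => u.2 y) :=
      isBoundedBilinearMap_apply.continuous.comp (continuous_snd.prodMk continuous_const)
    exact (hcy.tendsto p).comp hlim
  choose rn hrn hineqn using fun n => (mem_subdiffGraph_iff hproper (pn n)).1 (hpn n)
  obtain ⟨hbot, x₀, hx₀⟩ := hproper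
  have hv₀ : f x₀ = ((f x₀).toReal : EReal) := (EReal.coe_toReal hx₀ (hbot x₀)).symm
  set v₀ := (f x₀).toReal with hv₀def
  -- upper bounds on rn from x₀
  have hub : ∀ n, rn n ≤ v₀ + ((pn n).2 ((pn n).1) - (pn n).2 x₀) := by
    intro n
    have := hineqn n x₀
    rw [hv₀, EReal.coe_le_coe_iff] at this
    linarith
  -- Step A : f p.1 ≠ ⊤
  have htop : f p.1 ≠ ⊤ := by
    intro htop
    set B := fun n => v₀ + ((pn n).2 ((pn n).1) - (pn n).2 x₀) with hB
    have tendB : Tendsto B atTop (nhds (v₀ + (p.2 p.1 - p.2 x₀))) :=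
      tendsto_const_nhds.add (tend1.sub (tendy x₀))
    set M := v₀ + (p.2 p.1 - p.2 x₀) + 1 with hM
    have hevB : ∀ᶠ n in atTop, B n < M := tendB.eventually_lt_const (by simp [hM])
    have hlt : ((M : ℝ) : EReal) < f p.1 := by rw [htop]; exact EReal.coe_lt_top _
    have hevf : ∀ᶠ n in atTop, ((M : ℝ) : EReal) < f ((pn n).1) :=
      tendfst.eventually (hlsc p.1 _ hlt)
    obtain ⟨n, h1, h2⟩ := (hevB.and hevf).exists
    rw [hrn n, EReal.coe_lt_coe_iff] at h2
    exact absurd (lt_of_le_of_lt (hub n) h1) (not_lt.2 (le_of_lt h2))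
  set ρ := (f p.1).toReal with hρdef
  have hρ : f p.1 = (ρ : EReal) := (EReal.coe_toReal htop (hbot p.1)).symm
  rw [mem_subdiffGraph_iff ⟨hbot, x₀, hx₀⟩ p]
  refine ⟨ρ, hρ, fun y => ?_⟩
  rcases ereal_trichotomy (f y) with hfy | hfy | ⟨v, hfy⟩
  · exact absurd hfy (hbot y)
  · rw [hfy]; exact le_top
  · rw [hfy, EReal.coe_le_coe_iff]
    by_contra hcon
    push_neg at hcon
    set t := v + (p.2 p.1 - p.2 y) with ht
    have htρ : t < ρ := by simp only [ht]; linarith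
    set b := (t + ρ)/2 with hb
    have hbρ : b < ρ := by simp only [hb]; linarith
    have htb : t < b := by simp only [hb]; linarith
    have hlt : ((b : ℝ) : EReal) < f p.1 := by rw [hρ]; exact_mod_cast hbρ
    have hevf : ∀ᶠ n in atTop, ((b : ℝ) : EReal) < f ((pn n).1) :=
      tendfst.eventually (hlsc p.1 _ hlt)
    set C := fun n => v + ((pn n).2 ((pn n).1) - (pn n).2 y) with hC
    have tendC : Tendsto C atTop (nhds t) := by
      rw [ht]; exact tendsto_const_nhds.add (tend1.sub (tendy y))
    have hevC : ∀ᶠ n in atTop, C n < b := tendC.eventually_lt_const htb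
    obtain ⟨n, h1, h2⟩ := (hevf.and hevC).exists
    rw [hrn n, EReal.coe_lt_coe_iff] at h1
    have h3 : rn n ≤ C n := by
      have := hineqn n y
      rw [hfy, EReal.coe_le_coe_iff] at this
      simp only [hC]; linarith
    linarith
end cm

section minorant
variable {E : Type*} [NormedAddCommGroup E] [NormedSpace ℝ E] {f : E → EReal}

/-- convex combination bound extracted to reals -/
lemma ereal_convex_real {f : E → EReal} (hconv : ERealConvexOn f) {x y : E} {vx vy a b : ℝ}
    (hx : f x ≤ (vx : EReal)) (hy : f y ≤ (vy : EReal)) (hbot : ∀ z, f z ≠ ⊥)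
    (ha : 0 ≤ a) (hb : 0 ≤ b) (hab : a + b = 1) :
    f (a • x + b • y) ≤ ((a * vx + b * vy : ℝ) : EReal) := by
  have h := hconv x y a b ha hb hab
  rcases ereal_trichotomy (f x) with h1 | h1 | ⟨wx, h1⟩
  · exact absurd h1 (hbot x)
  · rw [h1] at hx; exact absurd hx (by simp)
  rcases ereal_trichotomy (f y) with h2 | h2 | ⟨wy, h2⟩
  · exact absurd h2 (hbot y)
  · rw [h2] at hy; exact absurd hy (by simp)
  rw [h1, h2, ← EReal.coe_mul, ← EReal.coe_mul, ← EReal.coe_add] at h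
  rw [h1, EReal.coe_le_coe_iff] at hx
  rw [h2, EReal.coe_le_coe_iff] at hy
  refine le_trans h ?_
  rw [EReal.coe_le_coe_iff]
  have := mul_le_mul_of_nonneg_left hx ha
  have := mul_le_mul_of_nonneg_left hy hb
  linarith

/-- Every proper convex lsc function has a continuous affine minorant. -/
lemma exists_affine_minorant (hproper : ERealProper f) (hconv : ERealConvexOn f)
    (hlsc : LowerSemicontinuous f) :
    ∃ (z : StrongDual ℝ E) (c : ℝ), ∀ y, ((z y + c : ℝ) : EReal) ≤ f y := by
  obtain ⟨hbot, x₀, hx₀⟩ := hproper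
  have hv₀ : f x₀ = ((f x₀).toReal : EReal) := (EReal.coe_toReal hx₀ (hbot x₀)).symm
  set v₀ := (f x₀).toReal with hv₀def
  set C : Set (E × ℝ) := {p | f p.1 ≤ ((p.2 : ℝ) : EReal)} with hC
  have hCclosed : IsClosed C :=
    closed_sublevel (LowerSemicontinuous.comp hlsc continuous_fst) continuous_snd
  have hCconvex : Convex ℝ C := by
    rintro ⟨y1, t1⟩ h1 ⟨y2, t2⟩ h2 a b ha hb hab
    simp only [hC, Set.mem_setOf_eq] at h1 h2 ⊢
    have := ereal_convex_real hconv h1 h2 hbot ha hb hab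
    simpa using this
  have hnotmem : (x₀, v₀ - 1) ∉ C := by
    simp only [hC, Set.mem_setOf_eq, hv₀, not_le]
    exact_mod_cast sub_one_lt v₀
  obtain ⟨ℓ, u, hu1, hu2⟩ := geometric_hahn_banach_point_closed hCconvex hCclosed hnotmem
  set ℓ₁ : StrongDual ℝ E := ℓ.comp (ContinuousLinearMap.inl ℝ E ℝ) with hℓ₁
  set β : ℝ := ℓ (0, 1) with hβ
  have hdecomp : ∀ (y : E) (t : ℝ), ℓ (y, t) = ℓ₁ y + t * β := by
    intro y t
    have : (y, t) = (y, (0:ℝ)) + t • ((0:E), (1:ℝ)) := by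
      simp [Prod.ext_iff]
    rw [this, map_add, map_smul]
    simp [hℓ₁, hβ, ContinuousLinearMap.comp_apply, smul_eq_mul]
  have hmemC : ∀ n : ℕ, (x₀, v₀ + n) ∈ C := by
    intro n
    simp only [hC, Set.mem_setOf_eq, hv₀]
    exact_mod_cast by linarith [Nat.cast_nonneg (α := ℝ) n]
  have hβ0 : 0 ≤ β := by
    by_contra hneg
    push_neg at hneg
    -- u < ℓ₁ x₀ + (v₀+n)β → contradiction for large n
    obtain ⟨n, hn⟩ := exists_nat_gt ((u - ℓ₁ x₀ - v₀ * β) / β)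
    have h := hu2 _ (hmemC n)
    rw [hdecomp] at h
    have h2 := (div_lt_iff_of_neg hneg).1 hn
    nlinarith
  have hβpos : 0 < β := by
    rcases lt_or_eq_of_le hβ0 with h | h
    · exact h
    · exfalso
      have h1 := hu2 _ (hmemC 0)
      rw [hdecomp] at h1
      rw [hdecomp] at hu1
      nlinarith
  refine ⟨-(β⁻¹ • ℓ₁), u / β, fun y => ?_⟩
  rcases ereal_trichotomy (f y) with hfy | hfy | ⟨v, hfy⟩
  · exact absurd hfy (hbot y)
  · rw [hfy]; exact le_top
  · rw [hfy, EReal.coe_le_coe_iff]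
    have hyC : (y, v) ∈ C := by simp [hC, hfy]
    have h := hu2 _ hyC
    rw [hdecomp] at h
    simp only [ContinuousLinearMap.neg_apply, ContinuousLinearMap.smul_apply, smul_eq_mul]
    have hinv : (0:ℝ) < β⁻¹ := inv_pos.2 hβpos
    have h2 := mul_le_mul_of_nonneg_left h.le hinv.le
    have h4 : β⁻¹ * (ℓ₁ y + v * β) = β⁻¹ * ℓ₁ y + v := by field_simp
    rw [div_eq_inv_mul]
    linarith [h2, h4 ▸ h2]
end minorant

section ekeland
variable {E : Type*} [NormedAddCommGroup E] [CompleteSpace E]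

lemma ereal_add_real_le' {x y : EReal} {p q c : ℝ} (hx : x = (p : EReal)) (hy : y = (q : EReal)) :
    x + (c : EReal) ≤ y ↔ p + c ≤ q := by
  rw [hx, hy, ← EReal.coe_add, EReal.coe_le_coe_iff]

lemma ekeland_weak (φ : E → EReal) (hlsc : LowerSemicontinuous φ) (m : ℝ)
    (hm : ∀ y, (m : EReal) ≤ φ y) (x₀ : E) (hx₀ : φ x₀ ≠ ⊤) (ε : ℝ) (hε : 0 < ε) :
    ∃ s : E, φ s ≤ φ x₀ ∧ ∀ y, φ s ≤ φ y + ((ε * ‖y - s‖ : ℝ) : EReal) := by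
  have hbot : ∀ y, φ y ≠ ⊥ := fun y => ereal_ne_bot_of_real_le (hm y)
  set F : E → Set E := fun s => {y | φ y + ((ε * ‖y - s‖ : ℝ) : EReal) ≤ φ s} with hF
  have hself : ∀ s, s ∈ F s := by
    intro s
    simp only [hF, Set.mem_setOf_eq, sub_self, norm_zero, mul_zero]
    rw [show ((0:ℝ) : EReal) = 0 from rfl, add_zero]
  -- the inductive step
  have hstep : ∀ (n : ℕ) (s : E), φ s ≠ ⊤ →
      ∃ s', s' ∈ F s ∧ φ s' ≠ ⊤ ∧ ∀ y ∈ F s, φ s' ≤ φ y + ((((1:ℝ)/2)^n : ℝ) : EReal) := by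
    intro n s hs
    set I := sInf (φ '' F s) with hI
    have hIle : I ≤ φ s := sInf_le ⟨s, hself s, rfl⟩
    have hIlow : (m : EReal) ≤ I := le_sInf (by rintro _ ⟨y, _, rfl⟩; exact hm y)
    have hItop : I ≠ ⊤ := fun h => hs (top_le_iff.1 (h ▸ hIle))
    have hIbot : I ≠ ⊥ := ereal_ne_bot_of_real_le hIlow
    set r := I.toReal with hr
    have hIr : I = (r : EReal) := ereal_eq_real hIbot hItop
    set δ : ℝ := ((1:ℝ)/2)^n with hδ
    have hδpos : (0:ℝ) < δ := pow_pos (by norm_num) n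
    have hlt : I < I + (δ : EReal) := by
      rw [hIr, ← EReal.coe_add]; exact EReal.coe_lt_coe_iff.2 (by linarith)
    obtain ⟨_, ⟨y, hyF, rfl⟩, hy⟩ := sInf_lt_iff.1 (lt_of_eq_of_lt hI.symm hlt : sInf (φ '' F s) < I + (δ:EReal))
    refine ⟨y, hyF, ?_, ?_⟩
    · exact ne_top_of_lt hy
    · intro z hzF
      have hIz : I ≤ φ z := sInf_le ⟨z, hzF, rfl⟩
      calc φ y ≤ I + (δ : EReal) := hy.le
        _ ≤ φ z + (δ : EReal) := add_le_add_left hIz _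
  choose g hg1 hg2 hg3 using hstep
  let S : ℕ → {s : E // φ s ≠ ⊤} :=
    fun n => Nat.rec ⟨x₀, hx₀⟩ (fun k p => ⟨g k p.1 p.2, hg2 k p.1 p.2⟩) n
  have hS0 : (S 0).1 = x₀ := rfl
  have hSmem : ∀ n, (S (n+1)).1 ∈ F (S n).1 := fun n => hg1 n (S n).1 (S n).2
  have hSapp : ∀ n, ∀ y ∈ F (S n).1, φ ((S (n+1)).1) ≤ φ y + ((((1:ℝ)/2)^n : ℝ) : EReal) :=
    fun n => hg3 n (S n).1 (S n).2
  set a : ℕ → ℝ := fun n => (φ (S n).1).toReal with ha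
  have hφa : ∀ n, φ (S n).1 = ((a n : ℝ) : EReal) := fun n => ereal_eq_real (hbot _) (S n).2
  have hma : ∀ n, m ≤ a n := by
    intro n; have := hm (S n).1; rw [hφa n, EReal.coe_le_coe_iff] at this; exact this
  -- membership in F in real terms
  have hFreal : ∀ (n : ℕ) (y : E) (v : ℝ), φ y = (v : EReal) →
      (y ∈ F (S n).1 ↔ v + ε * ‖y - (S n).1‖ ≤ a n) := by
    intro n y v hv
    simp only [hF, Set.mem_setOf_eq]
    exact ereal_add_real_le' hv (hφa n)
  -- chain property
  have hchain : ∀ n m', n ≤ m' → (S m').1 ∈ F (S n).1 := by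
    intro n m' hnm'
    induction m', hnm' using Nat.le_induction with
    | base => exact hself _
    | succ k hk ih =>
        have h1 := (hFreal k _ _ (hφa (k+1))).1 (hSmem k)
        have h2 := (hFreal n _ _ (hφa k)).1 ih
        rw [hFreal n _ _ (hφa (k+1))]
        have htri : ‖(S (k+1)).1 - (S n).1‖ ≤ ‖(S (k+1)).1 - (S k).1‖ + ‖(S k).1 - (S n).1‖ :=
          norm_sub_le_norm_sub_add_norm_sub _ _ _
        nlinarith [mul_le_mul_of_nonneg_left htri hε.le]
  have hmono : ∀ n m', n ≤ m' → a m' + ε * ‖(S m').1 - (S n).1‖ ≤ a n :=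
    fun n m' h => (hFreal n _ _ (hφa m')).1 (hchain n m' h)
  have hanti : Antitone a := fun n m' h => by
    have := hmono n m' h
    nlinarith [mul_nonneg hε.le (norm_nonneg ((S m').1 - (S n).1))]
  have hbdd : BddBelow (Set.range a) := ⟨m, by rintro _ ⟨n, rfl⟩; exact hma n⟩
  have hL : Tendsto a atTop (nhds (⨅ n, a n)) := tendsto_atTop_ciInf hanti hbdd
  set L := ⨅ n, a n with hLdef
  have hLle : ∀ n, L ≤ a n := fun n => ciInf_le hbdd n
  -- Cauchy
  have hcauchy : CauchySeq (fun n => (S n).1) := by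
    rw [Metric.cauchySeq_iff']
    intro η hη
    have : ∀ᶠ n in atTop, a n < L + ε * η :=
      hL.eventually_lt_const (by nlinarith)
    obtain ⟨N, hN⟩ := this.exists
    refine ⟨N, fun n hn => ?_⟩
    have h1 := hmono N n hn
    rw [dist_eq_norm]
    nlinarith [hLle n]
  obtain ⟨s, hstend⟩ := cauchySeq_tendsto_of_complete hcauchy
  -- s belongs to all F (S n)
  have hsF : ∀ n, s ∈ F (S n).1 := by
    intro n
    have hclosed : IsClosed (F (S n).1) := by
      have : F (S n).1 = {y | φ y ≤ ((a n - ε * ‖y - (S n).1‖ : ℝ) : EReal)} := by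
        ext y
        simp only [hF, Set.mem_setOf_eq]
        rw [hφa n, ereal_add_real_le_real]
      rw [this]
      exact closed_sublevel hlsc
        (continuous_const.sub (continuous_const.mul ((continuous_id.sub continuous_const).norm)))
    exact hclosed.mem_of_tendsto hstend (eventually_atTop.2 ⟨n, fun m' hm' => hchain n m' hm'⟩)
  have hφsne : φ s ≠ ⊤ := by
    have h := hsF 0
    simp only [hF, Set.mem_setOf_eq] at h
    intro htop
    rw [htop, EReal.top_add_of_ne_bot (EReal.coe_ne_bot _)] at h
    exact (S 0).2 (top_le_iff.1 h)
  set σ := (φ s).toReal with hσdef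
  have hσ : φ s = (σ : EReal) := ereal_eq_real (hbot s) hφsne
  have hsFr : ∀ n, σ + ε * ‖s - (S n).1‖ ≤ a n := fun n => (hFreal n s σ hσ).1 (hsF n)
  refine ⟨s, ?_, ?_⟩
  · have h := hsFr 0
    rw [hσ, ← hS0, hφa 0, EReal.coe_le_coe_iff]
    nlinarith [mul_nonneg hε.le (norm_nonneg (s - (S 0).1))]
  · intro y
    by_contra hcon
    push_neg at hcon
    have hytop : φ y ≠ ⊤ := by
      intro htop
      rw [htop, EReal.top_add_of_ne_bot (EReal.coe_ne_bot _)] at hcon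
      exact absurd hcon not_top_lt
    set v := (φ y).toReal with hv
    have hφy : φ y = (v : EReal) := ereal_eq_real (hbot y) hytop
    have hreal : v + ε * ‖y - s‖ < σ := by
      rw [hφy, hσ, ← EReal.coe_add, EReal.coe_lt_coe_iff] at hcon
      exact hcon
    have hyF : ∀ n, y ∈ F (S n).1 := by
      intro n
      rw [hFreal n y v hφy]
      have htri : ‖y - (S n).1‖ ≤ ‖y - s‖ + ‖s - (S n).1‖ :=
        norm_sub_le_norm_sub_add_norm_sub _ _ _
      nlinarith [hsFr n, mul_le_mul_of_nonneg_left htri hε.le]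
    have hσv : ∀ n : ℕ, σ ≤ v + ((1:ℝ)/2)^n := by
      intro n
      have h1 := hSapp n y (hyF n)
      rw [hφy, ← EReal.coe_add, hφa (n+1), EReal.coe_le_coe_iff] at h1
      have h2 := hsFr (n+1)
      nlinarith [mul_nonneg hε.le (norm_nonneg (s - (S (n+1)).1))]
    have hσlev : σ ≤ v := by
      by_contra hgt
      push_neg at hgt
      obtain ⟨n, hn⟩ := exists_pow_lt_of_lt_one (sub_pos.2 hgt) (by norm_num : (1:ℝ)/2 < 1)
      linarith [hσv n]
    nlinarith [mul_nonneg hε.le (norm_nonneg (y - s))]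
end ekeland

section keysep
variable {E : Type*} [NormedAddCommGroup E] [NormedSpace ℝ E] {f : E → EReal}

lemma exists_subgradient_of_min (hbot : ∀ z, f z ≠ ⊥) (hconv : ERealConvexOn f)
    {k : E → ℝ} (hkconv : ConvexOn ℝ Set.univ k) (hkcont : Continuous k)
    {s : E} {a : ℝ} (hfs : f s = (a : EReal))
    (hmin : ∀ y, ((a + k s : ℝ) : EReal) ≤ f y + ((k y : ℝ) : EReal)) :
    ∃ t : StrongDual ℝ E, (∀ y, ((a + (t y - t s) : ℝ) : EReal) ≤ f y) ∧
      (∀ y, k s - (t y - t s) ≤ k y) := by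
  set A : Set (E × ℝ) := {p | f p.1 ≤ ((a + p.2 : ℝ) : EReal)} with hA
  set B : Set (E × ℝ) := {p | p.2 < k s - k p.1} with hB
  have hAconv : Convex ℝ A := by
    rintro ⟨y1, t1⟩ h1 ⟨y2, t2⟩ h2 c1 c2 hc1 hc2 hc
    simp only [hA, Set.mem_setOf_eq] at h1 h2 ⊢
    have hcc := ereal_convex_real hconv h1 h2 hbot hc1 hc2 hc
    have heq : c1 * (a + t1) + c2 * (a + t2) = a + (c1 * t1 + c2 * t2) := by
      linear_combination a * hc
    simp only [Prod.smul_mk, smul_eq_mul, Prod.mk_add_mk]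
    rw [← heq]
    exact hcc
  have hBconv : Convex ℝ B := by
    rintro ⟨y1, t1⟩ h1 ⟨y2, t2⟩ h2 c1 c2 hc1 hc2 hc
    simp only [hB, Set.mem_setOf_eq] at h1 h2 ⊢
    have hk := hkconv.2 (Set.mem_univ y1) (Set.mem_univ y2) hc1 hc2 hc
    simp only [smul_eq_mul] at hk
    simp only [Prod.smul_mk, smul_eq_mul, Prod.mk_add_mk]
    rcases eq_or_lt_of_le hc1 with h0 | hpos
    · have hc2' : c2 = 1 := by linarith
      rw [← h0, hc2']
      simp only [zero_mul, one_mul, zero_smul, zero_add, one_smul] at hk ⊢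
      linarith
    · have e1 : c1 * t1 < c1 * (k s - k y1) := by exact (mul_lt_mul_iff_right₀ hpos).2 h1
      have e2 : c2 * t2 ≤ c2 * (k s - k y2) := mul_le_mul_of_nonneg_left h2.le hc2
      have e3 : c1 * k s + c2 * k s = k s := by linear_combination (k s) * hc
      linarith [hk]
  have hBopen : IsOpen B := by
    have : B = {p : E × ℝ | 0 < k s - k p.1 - p.2} := by
      ext p; simp only [hB, Set.mem_setOf_eq]; constructor <;> intro <;> linarith
    rw [this]
    exact isOpen_lt continuous_const
      ((continuous_const.sub (hkcont.comp continuous_fst)).sub continuous_snd)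
  have hdisj : Disjoint B A := by
    rw [Set.disjoint_left]
    rintro ⟨y, t1⟩ hmemB hmemA
    simp only [hA, hB, Set.mem_setOf_eq] at hmemA hmemB
    rcases ereal_trichotomy (f y) with hfy | hfy | ⟨v, hfy⟩
    · exact hbot y hfy
    · rw [hfy] at hmemA; exact absurd (top_le_iff.1 hmemA) (EReal.coe_ne_top _)
    · rw [hfy, EReal.coe_le_coe_iff] at hmemA
      have := hmin y
      rw [hfy, ← EReal.coe_add, EReal.coe_le_coe_iff] at this
      linarith
  obtain ⟨ℓ, u, hBsep, hAsep⟩ := geometric_hahn_banach_open hBconv hBopen hAconv hdisj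
  set ℓ₁ : StrongDual ℝ E := ℓ.comp (ContinuousLinearMap.inl ℝ E ℝ) with hℓ₁
  set β : ℝ := ℓ (0, 1) with hβ
  have hdecomp : ∀ (y : E) (t : ℝ), ℓ (y, t) = ℓ₁ y + t * β := by
    intro y t
    have : (y, t) = (y, (0:ℝ)) + t • ((0:E), (1:ℝ)) := by simp [Prod.ext_iff]
    rw [this, map_add, map_smul]
    simp [hℓ₁, hβ, ContinuousLinearMap.comp_apply, smul_eq_mul]
  have hsA : ∀ δ : ℝ, 0 ≤ δ → ((s, δ) : E × ℝ) ∈ A := by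
    intro δ hδ
    simp only [hA, Set.mem_setOf_eq, hfs, EReal.coe_le_coe_iff]
    linarith
  have hsB : ∀ δ : ℝ, 0 < δ → ((s, -δ) : E × ℝ) ∈ B := by
    intro δ hδ
    simp only [hB, Set.mem_setOf_eq, sub_self]
    linarith
  have hβ0 : 0 ≤ β := by
    by_contra hneg
    push_neg at hneg
    obtain ⟨n, hn⟩ := exists_nat_gt ((u - ℓ₁ s) / β)
    have h := hAsep _ (hsA n (Nat.cast_nonneg n))
    rw [hdecomp] at h
    have h2 := (div_lt_iff_of_neg hneg).1 hn
    nlinarith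
  have hβpos : 0 < β := by
    rcases lt_or_eq_of_le hβ0 with h | h
    · exact h
    · exfalso
      have h1 := hBsep _ (hsB 1 one_pos)
      have h2 := hAsep _ (hsA 0 le_rfl)
      rw [hdecomp] at h1 h2
      rw [← h] at h1 h2
      simp at h1 h2
      linarith
  have hueq : ℓ₁ s = u := by
    have h2 := hAsep _ (hsA 0 le_rfl)
    rw [hdecomp] at h2
    simp only [zero_mul, add_zero] at h2
    refine le_antisymm ?_ h2
    by_contra hgt
    push_neg at hgt
    have h1 := hBsep _ (hsB ((ℓ₁ s - u) / (2 * β)) (div_pos (by linarith) (by linarith)))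
    rw [hdecomp] at h1
    have : ((ℓ₁ s - u) / (2 * β)) * β = (ℓ₁ s - u) / 2 := by field_simp
    nlinarith
  refine ⟨-(β⁻¹ • ℓ₁), ?_, ?_⟩
  · intro y
    rcases ereal_trichotomy (f y) with hfy | hfy | ⟨v, hfy⟩
    · exact absurd hfy (hbot y)
    · rw [hfy]; exact le_top
    · rw [hfy, EReal.coe_le_coe_iff]
      have hyA : ((y, v - a) : E × ℝ) ∈ A := by
        simp only [hA, Set.mem_setOf_eq, hfy, EReal.coe_le_coe_iff]
        linarith
      have h := hAsep _ hyA
      rw [hdecomp] at h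
      simp only [ContinuousLinearMap.neg_apply, ContinuousLinearMap.smul_apply, smul_eq_mul]
      obtain ⟨τ, hτdef⟩ : ∃ τ : ℝ, τ = -(β⁻¹ * ℓ₁ y) - -(β⁻¹ * ℓ₁ s) := ⟨_, rfl⟩
      rw [← hτdef]
      have hτ : β * τ = ℓ₁ s - ℓ₁ y := by rw [hτdef]; field_simp; ring
      have h2 : β * τ ≤ β * (v - a) := by nlinarith [hτ, hueq, h]
      have h3 := (mul_le_mul_iff_right₀ hβpos).1 h2
      linarith
  · intro y
    by_contra hcon
    push_neg at hcon
    simp only [ContinuousLinearMap.neg_apply, ContinuousLinearMap.smul_apply, smul_eq_mul] at hcon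
    obtain ⟨τ, hτdef⟩ : ∃ τ : ℝ, τ = -(β⁻¹ * ℓ₁ y) - -(β⁻¹ * ℓ₁ s) := ⟨_, rfl⟩
    rw [← hτdef] at hcon
    obtain ⟨δ, hδ⟩ : ∃ δ : ℝ, δ = (k s - τ - k y) / 2 := ⟨_, rfl⟩
    have hδpos : 0 < δ := by rw [hδ]; linarith
    have hyB : ((y, k s - k y - δ) : E × ℝ) ∈ B := by
      simp only [hB, Set.mem_setOf_eq]; linarith
    have h := hBsep _ hyB
    rw [hdecomp] at h
    have hτ : β * τ = ℓ₁ s - ℓ₁ y := by rw [hτdef]; field_simp; ring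
    have h4 : (k s - k y - δ) * β < τ * β := by linarith [hτ, hueq, h]
    have h5 : k s - k y - δ < τ := (mul_lt_mul_iff_left₀ hβpos).1 h4
    linarith [h5, hδ, hcon]
end keysep

section quasi
variable {E : Type*} [NormedAddCommGroup E] [NormedSpace ℝ E]

lemma lsc_add_cont_s5 {X : Type*} [TopologicalSpace X] {φ : X → EReal} {k : X → ℝ}
    (hφ : LowerSemicontinuous φ) (hk : Continuous k) (hbot : ∀ y, φ y ≠ ⊥) :
    LowerSemicontinuous (fun y => φ y + ((k y : ℝ) : EReal)) := by
  intro y₀ b hb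
  have hadd : ∀ (z : X) (c1 c2 : ℝ), ((c1 : ℝ) : EReal) ≤ φ z → c2 ≤ k z →
      ((c1 + c2 : ℝ) : EReal) ≤ φ z + ((k z : ℝ) : EReal) := by
    intro z c1 c2 h1 h2
    rw [EReal.coe_add]
    exact add_le_add h1 (EReal.coe_le_coe_iff.2 h2)
  rcases ereal_trichotomy b with hb' | hb' | ⟨br, hb'⟩
  · apply Eventually.of_forall; intro z
    show b < φ z + ((k z : ℝ) : EReal)
    rw [hb', bot_lt_iff_ne_bot]
    simp [EReal.add_eq_bot_iff, hbot z]
  · rw [hb'] at hb; exact absurd hb not_top_lt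
  rcases ereal_trichotomy (φ y₀) with h | h | ⟨a, h⟩
  · exact absurd h (hbot y₀)
  · -- φ y₀ = ⊤
    have h1 : ∀ᶠ z in nhds y₀, ((br - k y₀ + 2 : ℝ) : EReal) < φ z :=
      hφ y₀ _ (by show _ < φ y₀; rw [h]; exact EReal.coe_lt_top _)
    have h2 : ∀ᶠ z in nhds y₀, k y₀ - 1 < k z :=
      (hk.continuousAt (x := y₀)).eventually_const_lt (by linarith)
    filter_upwards [h1, h2] with z hz1 hz2
    have := hadd z _ _ hz1.le hz2.le
    rw [hb']
    refine lt_of_lt_of_le ?_ this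
    exact EReal.coe_lt_coe_iff.2 (by linarith)
  · -- φ y₀ = a real
    simp only [gt_iff_lt] at hb
    rw [h, hb', ← EReal.coe_add, EReal.coe_lt_coe_iff] at hb
    obtain ⟨δ, hδ⟩ : ∃ δ : ℝ, δ = (a + k y₀ - br)/3 := ⟨_, rfl⟩
    have hδpos : 0 < δ := by rw [hδ]; linarith
    have h1 : ∀ᶠ z in nhds y₀, ((a - δ : ℝ) : EReal) < φ z :=
      hφ y₀ _ (by show _ < φ y₀; rw [h]; exact EReal.coe_lt_coe_iff.2 (by linarith))
    have h2 : ∀ᶠ z in nhds y₀, k y₀ - δ < k z :=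
      (hk.continuousAt (x := y₀)).eventually_const_lt (by linarith)
    filter_upwards [h1, h2] with z hz1 hz2
    have := hadd z _ _ hz1.le hz2.le
    rw [hb']
    refine lt_of_lt_of_le ?_ this
    exact EReal.coe_lt_coe_iff.2 (by rw [hδ]; linarith)

lemma convex_aux (x s : E) (x' : StrongDual ℝ E) (α : ℝ) (hα : 0 ≤ α) :
    ConvexOn ℝ Set.univ (fun y => 2⁻¹ * ‖y - x‖^2 - x' y + α * ‖y - s‖) := by
  refine ⟨convex_univ, ?_⟩
  intro y1 _ y2 _ c1 c2 hc1 hc2 hc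
  simp only [smul_eq_mul]
  have hcomb : ∀ w : E, c1 • y1 + c2 • y2 - w = c1 • (y1 - w) + c2 • (y2 - w) := by
    intro w
    have hw : c1 • w + c2 • w = w := by rw [← add_smul, hc, one_smul]
    rw [smul_sub, smul_sub]
    rw [show c1 • y1 - c1 • w + (c2 • y2 - c2 • w) = c1 • y1 + c2 • y2 - (c1 • w + c2 • w) by abel,
      hw]
  have ht1 : ‖c1 • y1 + c2 • y2 - x‖ ≤ c1 * ‖y1 - x‖ + c2 * ‖y2 - x‖ := by
    rw [hcomb x]
    refine le_trans (norm_add_le _ _) ?_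
    rw [norm_smul, norm_smul, Real.norm_eq_abs, Real.norm_eq_abs, abs_of_nonneg hc1,
      abs_of_nonneg hc2]
  have ht2 : ‖c1 • y1 + c2 • y2 - s‖ ≤ c1 * ‖y1 - s‖ + c2 * ‖y2 - s‖ := by
    rw [hcomb s]
    refine le_trans (norm_add_le _ _) ?_
    rw [norm_smul, norm_smul, Real.norm_eq_abs, Real.norm_eq_abs, abs_of_nonneg hc1,
      abs_of_nonneg hc2]
  have hlin : x' (c1 • y1 + c2 • y2) = c1 * x' y1 + c2 * x' y2 := by
    rw [map_add, map_smul, map_smul]; rfl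
  have hsq : ‖c1 • y1 + c2 • y2 - x‖^2 ≤ c1 * ‖y1 - x‖^2 + c2 * ‖y2 - x‖^2 := by
    have h1 : ‖c1 • y1 + c2 • y2 - x‖^2 ≤ (c1 * ‖y1 - x‖ + c2 * ‖y2 - x‖)^2 := by
      have := norm_nonneg (c1 • y1 + c2 • y2 - x)
      nlinarith [ht1]
    refine le_trans h1 ?_
    nlinarith [sq_nonneg (‖y1 - x‖ - ‖y2 - x‖), mul_nonneg hc1 hc2, hc]
  have hαt := mul_le_mul_of_nonneg_left ht2 hα
  rw [hlin]
  nlinarith [hsq, hαt]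

lemma exists_norming (w : StrongDual ℝ E) {δ : ℝ} (hδ : 0 < δ) :
    ∃ u : E, ‖u‖ ≤ 1 ∧ ‖w‖ - δ < w u := by
  by_contra hcon
  push_neg at hcon
  have habs : ∀ u : E, ‖u‖ ≤ 1 → |w u| ≤ ‖w‖ - δ := by
    intro u hu
    have h1 := hcon u hu
    have h2 := hcon (-u) (by rwa [norm_neg])
    rw [map_neg] at h2
    rw [abs_le]; constructor <;> linarith
  have hnn : 0 ≤ ‖w‖ - δ := le_trans (abs_nonneg _) (habs 0 (by simp))
  have hbound : ∀ v : E, ‖w v‖ ≤ (‖w‖ - δ) * ‖v‖ := by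
    intro v
    rcases eq_or_ne v 0 with rfl | hv
    · simp
    · have hnv : (0:ℝ) < ‖v‖ := norm_pos_iff.2 hv
      have := habs (‖v‖⁻¹ • v) (by rw [norm_smul, Real.norm_eq_abs, abs_of_nonneg (by positivity)]; rw [inv_mul_cancel₀ hnv.ne'])
      rw [map_smul] at this
      simp only [smul_eq_mul, abs_mul, abs_of_nonneg (inv_nonneg.2 hnv.le)] at this
      rw [Real.norm_eq_abs]
      calc |w v| = ‖v‖ * (‖v‖⁻¹ * |w v|) := by field_simp
        _ ≤ ‖v‖ * (‖w‖ - δ) := mul_le_mul_of_nonneg_left this hnv.le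
        _ = (‖w‖ - δ) * ‖v‖ := by ring
  have := ContinuousLinearMap.opNorm_le_bound w hnn hbound
  linarith

set_option maxHeartbeats 2000000 in
lemma subdiff_quasidense [CompleteSpace E]
    {f : E → EReal} (hproper : ERealProper f) (hconv : ERealConvexOn f)
    (hlsc : LowerSemicontinuous f) :
    ∀ (x : E) (x' : StrongDual ℝ E) (ε : ℝ), 0 < ε → ∃ p ∈ subdiffGraph f,
      2⁻¹ * ‖p.1 - x‖ ^ 2 + 2⁻¹ * ‖p.2 - x'‖ ^ 2 + (p.2 - x') (p.1 - x) < ε := by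
  intro x x' ε hε
  obtain ⟨hbot, x₀, hx₀⟩ := hproper
  obtain ⟨z, c, hzc⟩ := exists_affine_minorant ⟨hbot, x₀, hx₀⟩ hconv hlsc
  obtain ⟨k₀, hk₀⟩ : ∃ k₀ : E → ℝ, k₀ = fun y => 2⁻¹ * ‖y - x‖^2 - x' y := ⟨_, rfl⟩
  have hk₀cont : Continuous k₀ := by
    rw [hk₀]
    exact (continuous_const.mul (((continuous_id.sub continuous_const).norm).pow 2)).sub
      x'.continuous
  obtain ⟨g, hg⟩ : ∃ g : E → EReal, g = fun y => f y + ((k₀ y : ℝ) : EReal) := ⟨_, rfl⟩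
  have hglsc : LowerSemicontinuous g := hg ▸ lsc_add_cont_s5 hlsc hk₀cont hbot
  obtain ⟨K, hK⟩ : ∃ K : ℝ, K = ‖z - x'‖ := ⟨_, rfl⟩
  have hKnn : 0 ≤ K := hK ▸ norm_nonneg _
  -- pointwise lower bound in real terms
  have hlow : ∀ (y : E) (v : ℝ), f y = (v : EReal) →
      2⁻¹ * ‖y - x‖^2 - K * ‖y - x‖ - K * ‖x‖ + c ≤ v + k₀ y := by
    intro y v hv
    have h1 := hzc y
    rw [hv, EReal.coe_le_coe_iff] at h1
    have h2 : ‖(z - x') y‖ ≤ K * ‖y‖ := hK ▸ (z - x').le_opNorm y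
    rw [Real.norm_eq_abs, abs_le] at h2
    have h3 : ‖y‖ ≤ ‖y - x‖ + ‖x‖ := by
      calc ‖y‖ = ‖y - x + x‖ := by rw [sub_add_cancel]
        _ ≤ ‖y - x‖ + ‖x‖ := norm_add_le _ _
    have h4 : (z - x') y = z y - x' y := by simp [ContinuousLinearMap.sub_apply]
    have h5 : k₀ y = 2⁻¹ * ‖y - x‖^2 - x' y := by rw [hk₀]
    nlinarith [mul_le_mul_of_nonneg_left h3 hKnn]
  obtain ⟨m, hm⟩ : ∃ m : ℝ, m = c - K * ‖x‖ - K^2/2 := ⟨_, rfl⟩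
  have hglow : ∀ y, (m : EReal) ≤ g y := by
    intro y
    rcases ereal_trichotomy (f y) with h | h | ⟨v, h⟩
    · exact absurd h (hbot y)
    · rw [hg]; simp only
      rw [h, EReal.top_add_of_ne_bot (EReal.coe_ne_bot _)]; exact le_top
    · have := hlow y v h
      rw [hg]; simp only
      rw [h, ← EReal.coe_add, EReal.coe_le_coe_iff, hm]
      nlinarith [sq_nonneg (‖y - x‖ - K)]
  -- value at x₀
  have hv₀ : f x₀ = ((f x₀).toReal : EReal) := ereal_eq_real (hbot x₀) hx₀
  obtain ⟨G, hG⟩ : ∃ G : ℝ, G = (f x₀).toReal + k₀ x₀ := ⟨_, rfl⟩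
  have hgx₀ : g x₀ = (G : EReal) := by rw [hg]; simp only; rw [hv₀, ← EReal.coe_add, hG]
  -- radius bound
  obtain ⟨M, hM⟩ : ∃ M : ℝ, M = max (G - c + K * ‖x‖) 0 := ⟨_, rfl⟩
  have hMnn : 0 ≤ M := hM ▸ le_max_right _ _
  obtain ⟨R, hR⟩ : ∃ R : ℝ, R = K + Real.sqrt (2*M + K^2) := ⟨_, rfl⟩
  have hRnn : 0 ≤ R := by rw [hR]; positivity
  have hdR : ∀ s : E, g s ≤ (G : EReal) → ∀ vs : ℝ, f s = (vs : EReal) → ‖s - x‖ ≤ R := by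
    intro s hgs vs hvs
    have h1 := hlow s vs hvs
    have h2 : vs + k₀ s ≤ G := by
      rw [hg] at hgs; simp only at hgs
      rw [hvs, ← EReal.coe_add, EReal.coe_le_coe_iff] at hgs
      exact hgs
    have h3 : 2⁻¹ * ‖s - x‖^2 - K * ‖s - x‖ ≤ M := by
      rw [hM]
      have := le_max_left (G - c + K * ‖x‖) 0
      nlinarith
    have h5 : (‖s - x‖ - K)^2 ≤ 2*M + K^2 := by nlinarith
    have h6 : ‖s - x‖ - K ≤ Real.sqrt (2*M + K^2) := by
      calc ‖s - x‖ - K ≤ |‖s - x‖ - K| := le_abs_self _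
        _ = Real.sqrt ((‖s - x‖ - K)^2) := (Real.sqrt_sq_eq_abs _).symm
        _ ≤ _ := Real.sqrt_le_sqrt h5
    rw [hR]
    linarith
  -- choose α
  obtain ⟨α, hα⟩ : ∃ α : ℝ, α = min 1 (ε / (2*R + 2)) := ⟨_, rfl⟩
  have hαpos : 0 < α := by
    rw [hα]; exact lt_min one_pos (div_pos hε (by linarith))
  have hα1 : α ≤ 1 := hα ▸ min_le_left _ _
  have hαε : α * (2*R + 2) ≤ ε := by
    have h1 : α ≤ ε / (2*R + 2) := hα ▸ min_le_right _ _
    rw [← le_div_iff₀ (by linarith : (0:ℝ) < 2*R + 2)]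
    exact h1
  -- Ekeland
  obtain ⟨s, hs1, hs2⟩ := ekeland_weak g hglsc m hglow x₀ (by rw [hgx₀]; exact EReal.coe_ne_top _)
    α hαpos
  rw [hgx₀] at hs1
  -- f s is real
  have hfstop : f s ≠ ⊤ := by
    intro htop
    rw [hg] at hs1; simp only at hs1
    rw [htop, EReal.top_add_of_ne_bot (EReal.coe_ne_bot _)] at hs1
    exact (EReal.coe_ne_top G) (top_le_iff.1 hs1)
  obtain ⟨a, hfs⟩ : ∃ a : ℝ, f s = (a : EReal) := ⟨_, ereal_eq_real (hbot s) hfstop⟩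
  have hsR : ‖s - x‖ ≤ R := hdR s hs1 a hfs
  -- min property for the separation lemma
  obtain ⟨k, hk⟩ : ∃ k : E → ℝ, k = fun y => k₀ y + α * ‖y - s‖ := ⟨_, rfl⟩
  have hks : k s = k₀ s := by rw [hk]; simp
  have hmin : ∀ y, ((a + k s : ℝ) : EReal) ≤ f y + ((k y : ℝ) : EReal) := by
    intro y
    have := hs2 y
    rw [hg] at this; simp only at this
    rw [hfs, ← EReal.coe_add] at this
    rw [add_assoc, ← EReal.coe_add] at this
    rw [hks, hk]
    exact this
  have hkconv : ConvexOn ℝ Set.univ k := by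
    rw [hk, hk₀]; exact convex_aux x s x' α hαpos.le
  have hkcont : Continuous k := by
    rw [hk]
    exact hk₀cont.add (continuous_const.mul ((continuous_id.sub continuous_const).norm))
  obtain ⟨t, ht1, ht2⟩ := exists_subgradient_of_min hbot hconv hkconv hkcont hfs hmin
  refine ⟨(s, t), (mem_subdiffGraph_iff ⟨hbot, x₀, hx₀⟩ (s, t)).2 ⟨a, hfs, ht1⟩, ?_⟩
  -- estimates
  obtain ⟨w, hw⟩ : ∃ w : StrongDual ℝ E, w = x' - t := ⟨_, rfl⟩
  obtain ⟨d, hd⟩ : ∃ d : ℝ, d = ‖s - x‖ := ⟨_, rfl⟩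
  have hdnn : 0 ≤ d := hd ▸ norm_nonneg _
  have hkey : ∀ y : E, 2⁻¹ * d^2 + (w y - w s) - α * ‖y - s‖ ≤ 2⁻¹ * ‖y - x‖^2 := by
    intro y
    have h1 := ht2 y
    rw [hks, hk, hk₀] at h1
    simp only at h1
    rw [hw, hd]
    simp only [ContinuousLinearMap.sub_apply]
    linarith
  -- E1' : w (s - x) ≥ d^2 - α * d
  have hE1 : d^2 - α * d ≤ w (s - x) := by
    have hstep : ∀ τ : ℝ, 0 < τ → τ ≤ 1 → d^2 - α*d - τ*d^2/2 ≤ w (s - x) := by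
      intro τ hτ0 hτ1
      have h1 := hkey (s - τ • (s - x))
      have e1 : s - τ • (s - x) - x = (1 - τ) • (s - x) := by
        rw [sub_smul, one_smul]; abel
      have e2 : s - τ • (s - x) - s = -(τ • (s - x)) := by abel
      have e3 : ‖s - τ • (s - x) - x‖ = (1 - τ) * d := by
        rw [e1, norm_smul, Real.norm_eq_abs, abs_of_nonneg (by linarith), hd]
      have e4 : ‖s - τ • (s - x) - s‖ = τ * d := by
        rw [e2, norm_neg, norm_smul, Real.norm_eq_abs, abs_of_nonneg hτ0.le, hd]
      have e5 : w (s - τ • (s - x)) - w s = -(τ * w (s - x)) := by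
        rw [map_sub, map_smul]; simp [smul_eq_mul]; try ring
      rw [e3, e4, e5] at h1
      nlinarith [h1]
    by_contra hgt
    push_neg at hgt
    obtain ⟨gap, hgap⟩ : ∃ gap : ℝ, gap = d^2 - α*d - w (s - x) := ⟨_, rfl⟩
    have hgappos : 0 < gap := by rw [hgap]; linarith
    obtain ⟨τ, hτ⟩ : ∃ τ : ℝ, τ = min 1 (gap / (d^2 + 1)) := ⟨_, rfl⟩
    have hd2 : (0:ℝ) < d^2 + 1 := by positivity
    have hτ0 : 0 < τ := by rw [hτ]; exact lt_min one_pos (div_pos hgappos hd2)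
    have hτ1 : τ ≤ 1 := hτ ▸ min_le_left _ _
    have h8 : τ * d^2 ≤ gap / (d^2+1) * d^2 :=
      mul_le_mul_of_nonneg_right (hτ ▸ min_le_right _ _) (sq_nonneg d)
    have h9 : gap / (d^2+1) * d^2 < gap * 2 := by
      rw [div_mul_eq_mul_div, div_lt_iff₀ hd2]
      nlinarith
    have := hstep τ hτ0 hτ1
    linarith [this, h8, h9, hgap]
  -- E2 : ‖w‖ ≤ d + α
  have hE2 : ‖w‖ ≤ d + α := by
    by_contra hgt
    push_neg at hgt
    obtain ⟨gap, hgap⟩ : ∃ gap : ℝ, gap = ‖w‖ - d - α := ⟨_, rfl⟩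
    have hgappos : 0 < gap := by rw [hgap]; linarith
    obtain ⟨u, hu1, hu2⟩ := exists_norming w (show (0:ℝ) < gap/2 by linarith)
    have h1 := hkey (s + (gap/2) • u)
    have e1 : s + (gap/2) • u - s = (gap/2) • u := by abel
    have e2 : ‖s + (gap/2) • u - s‖ ≤ gap/2 := by
      rw [e1, norm_smul, Real.norm_eq_abs, abs_of_nonneg (by linarith)]
      nlinarith
    have e3 : ‖s + (gap/2) • u - x‖ ≤ d + gap/2 := by
      calc ‖s + (gap/2) • u - x‖ = ‖(s - x) + (gap/2) • u‖ := by rw [show s + (gap/2) • u - x = (s - x) + (gap/2) • u by abel]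
        _ ≤ ‖s - x‖ + ‖(gap/2) • u‖ := norm_add_le _ _
        _ ≤ d + gap/2 := by
            rw [hd, norm_smul, Real.norm_eq_abs, abs_of_nonneg (by linarith : (0:ℝ) ≤ gap/2)]
            nlinarith
    have e4 : w (s + (gap/2) • u) - w s = (gap/2) * w u := by
      rw [map_add, map_smul]; simp [smul_eq_mul]
    rw [e4] at h1
    have h2 : 2⁻¹ * ‖s + (gap/2) • u - x‖^2 ≤ 2⁻¹ * (d + gap/2)^2 := by
      nlinarith [norm_nonneg (s + (gap/2) • u - x), e3]
    have h3 : α * ‖s + (gap/2) • u - s‖ ≤ α * (gap/2) := mul_le_mul_of_nonneg_left e2 hαpos.le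
    -- so (gap/2) * w u ≤ d*(gap/2) + (gap/2)^2/2 + α*(gap/2)
    have h4 : (gap/2) * w u ≤ (d + gap/2 + α) * (gap/2) := by nlinarith [h1, h2, h3]
    have h5 : w u ≤ d + gap/2 + α := by
      have := (mul_le_mul_iff_left₀ (show (0:ℝ) < gap/2 by linarith)).1
        (by linarith [h4] : w u * (gap/2) ≤ (d + gap/2 + α) * (gap/2))
      exact this
    rw [hgap] at hu2
    linarith
  -- final computation
  have hfin1 : ((s, t) : E × StrongDual ℝ E).2 - x' = -w := by rw [hw]; simp [neg_sub]
  have hfnorm : ‖((s, t) : E × StrongDual ℝ E).2 - x'‖ = ‖w‖ := by rw [hfin1, norm_neg]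
  have hfapp : (((s, t) : E × StrongDual ℝ E).2 - x') (((s, t) : E × StrongDual ℝ E).1 - x) = -(w (s - x)) := by
    rw [hfin1]; simp
  rw [hfnorm, hfapp]
  simp only [← hd]
  have hαd' : α * d ≤ α * R := by
    refine mul_le_mul_of_nonneg_left ?_ hαpos.le
    rw [hd]; exact hsR
  have hsq : ‖w‖^2 ≤ (d + α)^2 := by nlinarith [norm_nonneg w, hE2]
  have hαα : α * α ≤ α := by nlinarith
  nlinarith [hE1, hsq, hαd', hαε, hαpos, hRnn]
end quasi


/-- The subdifferential of a proper convex lower semicontinuous function on a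
nonzero real Banach space is closed, monotone and quasidense. -/
theorem subdiff_closed_monotone_quasidense
    {E : Type*} [NormedAddCommGroup E] [NormedSpace ℝ E] [CompleteSpace E] [Nontrivial E]
    (f : E → EReal) (hproper : ERealProper f) (hconv : ERealConvexOn f)
    (hlsc : LowerSemicontinuous f) :
    IsClosed (subdiffGraph f) ∧ IsMonotoneGraph (subdiffGraph f) ∧
      IsQuasidense (subdiffGraph f) := by
  refine ⟨subdiff_closed hproper hlsc, subdiff_monotone hproper, ?_⟩
  intro x x' ε hε
  exact subdiff_quasidense hproper hconv hlsc x x' ε hε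
end

section
/- Let E be a nonzero real Banach space and f : E → (−∞,∞] be proper, convex and lower semicontinuous. Then G((∂f)^𝔽) ⊆ G(∂(f*)); that is, if (y*,y**) ∈ E* × E** satisfies φ_{∂f}*(y*,y**) = ⟨y*,y**⟩, then f*(y*) + f**(y**) = ⟨y*,y**⟩. -/
open NormedSpace Filter

/-- For proper convex lower semicontinuous `f`,
`G((∂f)^𝔽) ⊆ G(∂(f*))`. -/
theorem fitzExtGraph_subdiff_subset_subdiff_conj
    {E : Type*} [NormedAddCommGroup E] [NormedSpace ℝ E] [CompleteSpace E] [Nontrivial E]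
    (f : E → EReal) (hproper : ERealProper f) (hconv : ERealConvexOn f)
    (hlsc : LowerSemicontinuous f) :
    fitzExtGraph (subdiffGraph f) ⊆ subdiffGraph (fnConj f) := by
  rintro ⟨ys, yss⟩ hq
  simp only [fitzExtGraph, Set.mem_setOf_eq] at hq
  set G := subdiffGraph f with hG
  set γ : ℝ := yss ys with hγ
  obtain ⟨x0, hx0t⟩ := hproper.2
  obtain ⟨m, hm⟩ : ∃ r : ℝ, f x0 = r := ⟨(f x0).toReal, (EReal.coe_toReal hx0t (hproper.1 x0)).symm⟩
  have hconj_ne_bot : ∀ xs : StrongDual ℝ E, fnConj f xs ≠ ⊥ := by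
    intro xs
    have h1 : ((xs x0 - m : ℝ) : EReal) ≤ fnConj f xs := by
      have := le_iSup (fun x : E => ((xs x : ℝ) : EReal) - f x) x0
      rwa [hm, ← EReal.coe_sub] at this
    intro hbot
    rw [hbot] at h1
    exact EReal.coe_ne_bot _ (le_bot_iff.mp h1)
  have FY : ∀ (x : E) (xs : StrongDual ℝ E), ((xs x : ℝ) : EReal) - f x ≤ fnConj f xs :=
    fun x xs => le_iSup (fun x : E => ((xs x : ℝ) : EReal) - f x) x
  have hGmem : ∀ p : E × StrongDual ℝ E, p ∈ G →
      ∃ u v : ℝ, f p.1 = u ∧ fnConj f p.2 = v ∧ u + v = p.2 p.1 := by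
    rintro ⟨s, ss⟩ hp
    simp only [hG, subdiffGraph, Set.mem_setOf_eq] at hp
    have h1 : f s ≠ ⊤ := by
      intro h; rw [h, EReal.top_add_of_ne_bot (hconj_ne_bot ss)] at hp
      exact (EReal.top_ne_coe _) hp
    have h2 : fnConj f ss ≠ ⊤ := by
      intro h; rw [h, EReal.add_top_of_ne_bot (hproper.1 s)] at hp
      exact (EReal.top_ne_coe _) hp
    obtain ⟨u, hu⟩ : ∃ r : ℝ, f s = r := ⟨(f s).toReal, (EReal.coe_toReal h1 (hproper.1 s)).symm⟩
    obtain ⟨v, hv⟩ : ∃ r : ℝ, fnConj f ss = r :=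
      ⟨(fnConj f ss).toReal, (EReal.coe_toReal h2 (hconj_ne_bot ss)).symm⟩
    refine ⟨u, v, hu, hv, ?_⟩
    rw [hu, hv, ← EReal.coe_add] at hp
    exact_mod_cast hp
  have hGne : G.Nonempty := by
    by_contra hemp
    rw [Set.not_nonempty_iff_eq_empty] at hemp
    have hbot : ∀ p : E × StrongDual ℝ E, fitzFn G p = ⊥ := by
      intro p
      have : IsEmpty (↥G) := by rw [hemp]; exact Set.isEmpty_coe_sort.mpr rfl
      exact iSup_of_empty _
    have htop : pairConj (fitzFn G) (ys, yss) = ⊤ := by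
      refine top_le_iff.mp ?_
      have h1 : ((ys (0:E) + yss (0: StrongDual ℝ E) : ℝ) : EReal) - fitzFn G (0, 0) ≤
          pairConj (fitzFn G) (ys, yss) :=
        le_iSup (fun p : E × StrongDual ℝ E => ((ys p.1 + yss p.2 : ℝ) : EReal) - fitzFn G p) (0, 0)
      rw [hbot] at h1
      simpa using h1
    rw [htop] at hq
    exact (EReal.top_ne_coe _) hq
  have claim1 : ∀ (x : E) (xs : StrongDual ℝ E), fitzFn G (x, xs) ≤ f x + fnConj f xs := by
    intro x xs
    refine iSup_le ?_
    rintro ⟨⟨s, ss⟩, hsG⟩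
    obtain ⟨u, v, hu, hv, huv⟩ := hGmem _ hsG
    by_cases hfx : f x = ⊤
    · rw [hfx, EReal.top_add_of_ne_bot (hconj_ne_bot xs)]; exact le_top
    by_cases hd : fnConj f xs = ⊤
    · rw [hd, EReal.add_top_of_ne_bot (hproper.1 x)]; exact le_top
    obtain ⟨c, hc⟩ : ∃ r : ℝ, f x = r := ⟨(f x).toReal, (EReal.coe_toReal hfx (hproper.1 x)).symm⟩
    obtain ⟨d, hdd⟩ : ∃ r : ℝ, fnConj f xs = r :=
      ⟨(fnConj f xs).toReal, (EReal.coe_toReal hd (hconj_ne_bot xs)).symm⟩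
    have hF1 : xs s - u ≤ d := by
      have := FY s xs; rw [hu, hdd, ← EReal.coe_sub] at this; exact_mod_cast this
    have hF2 : ss x - c ≤ v := by
      have := FY x ss; rw [hc, hv, ← EReal.coe_sub] at this; exact_mod_cast this
    rw [hc, hdd, ← EReal.coe_add, EReal.coe_le_coe_iff]
    simp only at huv ⊢
    linarith
  have hterm : ∀ p : E × StrongDual ℝ E, ((ys p.1 + yss p.2 : ℝ) : EReal) - fitzFn G p ≤ (γ : EReal) := by
    intro p
    have h := le_iSup (fun p : E × StrongDual ℝ E => ((ys p.1 + yss p.2 : ℝ) : EReal) - fitzFn G p) p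
    rw [show (⨆ p : E × StrongDual ℝ E, ((ys p.1 + yss p.2 : ℝ) : EReal) - fitzFn G p) =
      pairConj (fitzFn G) (ys, yss) from rfl, hq] at h
    exact h
  have L1 : ∀ (x : E) (xs : StrongDual ℝ E),
      (((ys x : ℝ) : EReal) - f x) + (((yss xs : ℝ) : EReal) - fnConj f xs) ≤ (γ : EReal) := by
    intro x xs
    by_cases hfx : f x = ⊤
    · rw [hfx]; simp
    by_cases hd : fnConj f xs = ⊤
    · rw [hd]; simp
    obtain ⟨c, hc⟩ : ∃ r : ℝ, f x = r := ⟨(f x).toReal, (EReal.coe_toReal hfx (hproper.1 x)).symm⟩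
    obtain ⟨d, hdd⟩ : ∃ r : ℝ, fnConj f xs = r :=
      ⟨(fnConj f xs).toReal, (EReal.coe_toReal hd (hconj_ne_bot xs)).symm⟩
    have h1 : fitzFn G (x, xs) ≤ ((c + d : ℝ) : EReal) := by
      have := claim1 x xs; rwa [hc, hdd, ← EReal.coe_add] at this
    calc (((ys x : ℝ) : EReal) - f x) + (((yss xs : ℝ) : EReal) - fnConj f xs)
        = ((ys x + yss xs : ℝ) : EReal) - ((c + d : ℝ) : EReal) := by
          rw [hc, hdd, ← EReal.coe_sub, ← EReal.coe_sub, ← EReal.coe_add, ← EReal.coe_sub,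
            EReal.coe_eq_coe_iff]; ring
      _ ≤ ((ys x + yss xs : ℝ) : EReal) - fitzFn G (x, xs) := EReal.sub_le_sub le_rfl h1
      _ ≤ (γ : EReal) := hterm (x, xs)
  obtain ⟨⟨s0, s0s⟩, hs0G⟩ := hGne
  obtain ⟨u, v, hu, hv, huv⟩ := hGmem _ hs0G
  set A := fnConj f ys with hA
  set B := fnConj (fnConj f) yss with hB
  have hAtop : A ≠ ⊤ := by
    intro htop
    have key : ∀ x : E, ((ys x : ℝ) : EReal) - f x ≤ ((γ - (yss s0s - v) : ℝ) : EReal) := by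
      intro x
      have h1 := L1 x s0s
      rw [hv, ← EReal.coe_sub] at h1
      have h2 : (((ys x : ℝ) : EReal) - f x) =
          (((ys x : ℝ) : EReal) - f x) + ((yss s0s - v : ℝ) : EReal) - ((yss s0s - v : ℝ) : EReal) :=
        (EReal.add_sub_cancel_right).symm
      rw [h2]
      calc (((ys x : ℝ) : EReal) - f x) + ((yss s0s - v : ℝ) : EReal) - ((yss s0s - v : ℝ) : EReal)
          ≤ (γ : EReal) - ((yss s0s - v : ℝ) : EReal) := EReal.sub_le_sub h1 le_rfl
        _ = ((γ - (yss s0s - v) : ℝ) : EReal) := by rw [← EReal.coe_sub]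
    have hle : A ≤ ((γ - (yss s0s - v) : ℝ) : EReal) := iSup_le key
    rw [htop] at hle
    exact EReal.coe_ne_top _ (top_le_iff.mp hle)
  have hAbot : A ≠ ⊥ := hconj_ne_bot ys
  obtain ⟨α, hα⟩ : ∃ r : ℝ, A = r := ⟨A.toReal, (EReal.coe_toReal hAtop hAbot).symm⟩
  have hBlow : ((γ - α : ℝ) : EReal) ≤ B := by
    have h := le_iSup (fun xs : StrongDual ℝ E => ((yss xs : ℝ) : EReal) - fnConj f xs) ys
    rw [← hA, hα, ← EReal.coe_sub] at h
    exact h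
  have hBtop : B ≠ ⊤ := by
    intro htop
    have key : ∀ xs : StrongDual ℝ E,
        ((yss xs : ℝ) : EReal) - fnConj f xs ≤ ((γ - (ys x0 - m) : ℝ) : EReal) := by
      intro xs
      have h1 := L1 x0 xs
      rw [hm, ← EReal.coe_sub, add_comm] at h1
      have h2 : (((yss xs : ℝ) : EReal) - fnConj f xs) =
          (((yss xs : ℝ) : EReal) - fnConj f xs) + ((ys x0 - m : ℝ) : EReal)
            - ((ys x0 - m : ℝ) : EReal) :=
        (EReal.add_sub_cancel_right).symm
      rw [h2]
      calc (((yss xs : ℝ) : EReal) - fnConj f xs) + ((ys x0 - m : ℝ) : EReal)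
            - ((ys x0 - m : ℝ) : EReal)
          ≤ (γ : EReal) - ((ys x0 - m : ℝ) : EReal) := EReal.sub_le_sub h1 le_rfl
        _ = ((γ - (ys x0 - m) : ℝ) : EReal) := by rw [← EReal.coe_sub]
    have hle : B ≤ ((γ - (ys x0 - m) : ℝ) : EReal) := iSup_le key
    rw [htop] at hle
    exact EReal.coe_ne_top _ (top_le_iff.mp hle)
  have hBbot : B ≠ ⊥ := fun h => by rw [h] at hBlow; exact EReal.coe_ne_bot _ (le_bot_iff.mp hBlow)
  obtain ⟨β, hβ⟩ : ∃ r : ℝ, B = r := ⟨B.toReal, (EReal.coe_toReal hBtop hBbot).symm⟩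
  have step2 : γ ≤ α + β := by
    rw [hβ] at hBlow
    have := EReal.coe_le_coe_iff.mp hBlow
    linarith
  have step1 : α + β ≤ γ := by
    by_contra hlt
    push_neg at hlt
    set ε : ℝ := (α + β - γ) / 4 with hε
    have hεpos : 0 < ε := by simp only [hε]; linarith
    obtain ⟨x, hx⟩ : ∃ x : E, ((α - ε : ℝ) : EReal) < ((ys x : ℝ) : EReal) - f x := by
      have h1 : ((α - ε : ℝ) : EReal) < A := by
        rw [hα]; exact_mod_cast (by linarith : α - ε < α)
      exact lt_iSup_iff.mp h1
    obtain ⟨xs, hxs⟩ : ∃ xs : StrongDual ℝ E, ((β - ε : ℝ) : EReal) < ((yss xs : ℝ) : EReal) - fnConj f xs := by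
      have h1 : ((β - ε : ℝ) : EReal) < B := by
        rw [hβ]; exact_mod_cast (by linarith : β - ε < β)
      exact lt_iSup_iff.mp h1
    have hfxt : f x ≠ ⊤ := by
      intro h; rw [h] at hx; simp at hx
    obtain ⟨c, hc⟩ : ∃ r : ℝ, f x = r := ⟨(f x).toReal, (EReal.coe_toReal hfxt (hproper.1 x)).symm⟩
    have hdt : fnConj f xs ≠ ⊤ := by
      intro h; rw [h] at hxs; simp at hxs
    obtain ⟨d, hdd⟩ : ∃ r : ℝ, fnConj f xs = r :=
      ⟨(fnConj f xs).toReal, (EReal.coe_toReal hdt (hconj_ne_bot xs)).symm⟩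
    rw [hc, ← EReal.coe_sub] at hx
    rw [hdd, ← EReal.coe_sub] at hxs
    have hx' : α - ε < ys x - c := EReal.coe_lt_coe_iff.mp hx
    have hxs' : β - ε < yss xs - d := EReal.coe_lt_coe_iff.mp hxs
    have h1 := L1 x xs
    rw [hc, hdd, ← EReal.coe_sub, ← EReal.coe_sub, ← EReal.coe_add] at h1
    have h1' : (ys x - c) + (yss xs - d) ≤ γ := EReal.coe_le_coe_iff.mp h1
    simp only [hε] at hx' hxs'
    linarith
  have hfinal : α + β = γ := le_antisymm step1 step2
  show fnConj f ys + fnConj (fnConj f) yss = ((yss ys : ℝ) : EReal)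
  rw [← hA, ← hB, hα, hβ, ← EReal.coe_add, hfinal]
end

section
/- Let E be a nonzero real Banach space, g : E* × E** → (−∞,∞] be proper, convex and lower semicontinuous, and suppose g(y*,y**) ≥ ⟨y*,y**⟩ for all (y*,y**) ∈ E* × E**. If (z*,z**) ∈ E* × E** satisfies g(z*,z**) = ⟨z*,z**⟩, then g*(z**, ẑ*) = ⟨z*,z**⟩, where g* is the Fenchel conjugate of g on E** × E*** and ẑ* is the canonical image of z* in E***. -/
open NormedSpace Filter

/-- If `g : E* × E** → (−∞,∞]` is proper, convex, lower semicontinuous,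
dominates the duality pairing, and `g(z*,z**) = ⟨z*,z**⟩`, then
`g*(z**, ẑ*) = ⟨z*,z**⟩`. -/
theorem conj_pairing_of_eq_pairing
    {E : Type*} [NormedAddCommGroup E] [NormedSpace ℝ E] [CompleteSpace E] [Nontrivial E]
    (g : StrongDual ℝ E × StrongDual ℝ (StrongDual ℝ E) → EReal)
    (hproper : ERealProper g) (hconv : ERealConvexOn g) (hlsc : LowerSemicontinuous g)
    (hge : ∀ q : StrongDual ℝ E × StrongDual ℝ (StrongDual ℝ E), ((q.2 q.1 : ℝ) : EReal) ≤ g q)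
    (z' : StrongDual ℝ E) (z'' : StrongDual ℝ (StrongDual ℝ E))
    (hz : g (z', z'') = ((z'' z' : ℝ) : EReal)) :
    pairConj g (z'', inclusionInDoubleDual ℝ (StrongDual ℝ E) z') = ((z'' z' : ℝ) : EReal) := by
  set c : ℝ := z'' z' with hc
  apply le_antisymm
  · -- upper bound
    refine iSup_le fun p => ?_
    obtain ⟨y1, y2⟩ := p
    by_cases htop : g (y1, y2) = ⊤
    · simp only [htop]
      rw [EReal.sub_top]
      exact bot_le
    · have hbot := hproper.1 (y1, y2)
      set r : ℝ := (g (y1, y2)).toReal with hr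
      have hgr : g (y1, y2) = (r : EReal) := (EReal.coe_toReal htop hbot).symm
      set A : ℝ := z'' y1 with hA
      have key : ∀ t : ℝ, t ∈ Set.Ioo (0:ℝ) 1 →
          (1 - t) * (A + y2 z' - c) + t * (y2 y1) ≤ r := by
        intro t ht
        have h1 : (0:ℝ) ≤ 1 - t := by linarith [ht.2]
        have h2 : (0:ℝ) < t := ht.1
        have hcv := hconv (z', z'') (y1, y2) (1 - t) t h1 h2.le (by ring)
        have hgq := hge ((1 - t) • (z', z'') + t • (y1, y2))
        have hchain := le_trans hgq hcv
        rw [hz, hgr] at hchain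
        have hpt : ((1 - t) • (z', z'') + t • (y1, y2)) =
            ((1 - t) • z' + t • y1, (1 - t) • z'' + t • y2) := rfl
        rw [hpt] at hchain
        have hval : (((1 - t) • z'' + t • y2) ((1 - t) • z' + t • y1) : ℝ)
            = (1 - t) * ((1 - t) * c + t * (z'' y1))
              + t * ((1 - t) * (y2 z') + t * (y2 y1)) := by
          simp [map_add, map_smul, smul_eq_mul, hc]
          ring
        rw [hval] at hchain
        rw [← EReal.coe_mul, ← EReal.coe_mul, ← EReal.coe_add] at hchain
        have hre : (1 - t) * ((1 - t) * c + t * (z'' y1))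
            + t * ((1 - t) * (y2 z') + t * (y2 y1)) ≤ (1 - t) * c + t * r :=
          EReal.coe_le_coe_iff.mp hchain
        nlinarith [hre, h2]
      have hlim : Filter.Tendsto (fun t : ℝ => (1 - t) * (A + y2 z' - c) + t * (y2 y1))
          (nhdsWithin 0 (Set.Ioi 0)) (nhds (A + y2 z' - c)) := by
        have hcont : Continuous (fun t : ℝ => (1 - t) * (A + y2 z' - c) + t * (y2 y1)) := by
          fun_prop
        exact (hcont.tendsto' 0 _ (by ring)).mono_left nhdsWithin_le_nhds
      have hLle : A + y2 z' - c ≤ r := by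
        refine le_of_tendsto hlim ?_
        filter_upwards [Ioo_mem_nhdsGT_of_mem (Set.mem_Ico.mpr ⟨le_refl (0:ℝ), one_pos⟩)]
          with t ht using key t ht
      have hfin : ((z'' y1 + (inclusionInDoubleDual ℝ (StrongDual ℝ E) z') y2 : ℝ) : EReal)
          - g (y1, y2) = (((z'' y1 + y2 z') - r : ℝ) : EReal) := by
        rw [hgr, dual_def, ← EReal.coe_sub]
      rw [hfin]
      exact EReal.coe_le_coe_iff.mpr (by linarith)
  · -- lower bound
    have hle := le_iSup (fun p : StrongDual ℝ E × StrongDual ℝ (StrongDual ℝ E) =>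
      (((z'' p.1 + (inclusionInDoubleDual ℝ (StrongDual ℝ E) z') p.2 : ℝ)) : EReal) - g p) (z', z'')
    have hval : (((z'' z' + (inclusionInDoubleDual ℝ (StrongDual ℝ E) z') z'' : ℝ)) : EReal)
        - g (z', z'') = ((c : ℝ) : EReal) := by
      rw [hz, dual_def, ← EReal.coe_sub]
      exact congrArg _ (by rw [hc]; ring)
    rw [hval] at hle
    exact hle
end
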